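/- arXiv:0809.3061 — 5 statements merged into one kernel-verified Lean document; each statement's English description precedes it below -/
import Mathlib

section
/- For every z on the unit circle 𝕋 one has |R′(z)| > 1; in particular R′ has no zeros on 𝕋, so the restriction of R to 𝕋 is an expanding map without branch points. -/
/-- For a finite Blaschke product of degree `n ≥ 2` with `R(0) = 0`,
for every `z` on the unit circle one has `|R'(z)| > 1`; in particular `R'` has no zeros
on the circle, so `R` restricted to the circle is expanding and has no branch points. -/
theorem blaschke_deriv_expanding_on_circle
    (n : ℕ) (hn : 2 ≤ n) (zs : ℕ → ℂ)
    (hzs : ∀ k ∈ Finset.Ico 1 n, ‖zs k‖ < 1)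
    (lam : ℂ) (hlam : ‖lam‖ = 1) (R : ℂ → ℂ)
    (hR : ∀ z : ℂ, R z = lam * z * ∏ k ∈ Finset.Ico 1 n,
      (z - zs k) / (1 - (starRingEnd ℂ) (zs k) * z)) :
    ∀ z : ℂ, ‖z‖ = 1 → 1 < ‖deriv R z‖ ∧ deriv R z ≠ 0 := by
  intro z hz
  have hRfun : R = fun w => lam * w * ∏ k ∈ Finset.Ico 1 n,
      (w - zs k) / (1 - (starRingEnd ℂ) (zs k) * w) := funext hR
  subst hRfun
  set s := Finset.Ico 1 n with hs
  have hzz : z * (starRingEnd ℂ) z = 1 := by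
    rw [Complex.mul_conj]
    norm_cast
    rw [Complex.normSq_eq_norm_sq, hz]; norm_num
  have hz0 : z ≠ 0 := by
    intro h; rw [h] at hz; simp at hz
  -- numerators nonzero
  have hm : ∀ k ∈ s, z - zs k ≠ 0 := by
    intro k hk h
    have := hzs k hk
    rw [sub_eq_zero] at h
    rw [← h, hz] at this
    exact lt_irrefl _ this
  -- key identity
  have hkey : ∀ k ∈ s, 1 - (starRingEnd ℂ) (zs k) * z = z * (starRingEnd ℂ) (z - zs k) := by
    intro k hk
    rw [map_sub, mul_sub, hzz]
    ring
  have hd : ∀ k ∈ s, 1 - (starRingEnd ℂ) (zs k) * z ≠ 0 := by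
    intro k hk
    rw [hkey k hk]
    refine mul_ne_zero hz0 (fun h => hm k hk ?_)
    rw [← Complex.conj_conj (z - zs k), h, map_zero]
  -- derivative of each factor
  have hder : ∀ k ∈ s, HasDerivAt (fun w => (w - zs k) / (1 - (starRingEnd ℂ) (zs k) * w))
      ((1 - (starRingEnd ℂ) (zs k) * zs k) / (1 - (starRingEnd ℂ) (zs k) * z) ^ 2) z := by
    intro k hk
    have h1 : HasDerivAt (fun w => w - zs k) 1 z := (hasDerivAt_id z).sub_const _
    have h2 : HasDerivAt (fun w => 1 - (starRingEnd ℂ) (zs k) * w)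
        (-(starRingEnd ℂ) (zs k)) z := by
      simpa using ((hasDerivAt_id z).const_mul ((starRingEnd ℂ) (zs k))).const_sub 1
    have := h1.fun_div h2 (hd k hk)
    refine this.congr_deriv ?_
    ring
  set f : ℕ → ℂ → ℂ := fun k w => (w - zs k) / (1 - (starRingEnd ℂ) (zs k) * w) with hf
  set f' : ℕ → ℂ := fun k => (1 - (starRingEnd ℂ) (zs k) * zs k) / (1 - (starRingEnd ℂ) (zs k) * z) ^ 2 with hf'
  have hP : HasDerivAt (∏ k ∈ s, f k ·) (∑ k ∈ s, (∏ j ∈ s.erase k, f j z) • f' k) z :=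
    HasDerivAt.fun_finsetProd hder
  set P : ℂ := ∏ k ∈ s, f k z with hPdef
  set S : ℂ := ∑ k ∈ s, (∏ j ∈ s.erase k, f j z) • f' k with hSdef
  have hD : HasDerivAt (fun w => lam * w * ∏ k ∈ s, f k w) (lam * (P + z * S)) z := by
    have h := ((hasDerivAt_id z).mul hP).const_mul lam
    simp only [id_eq, one_mul] at h
    exact h.congr_of_eventuallyEq (Filter.Eventually.of_forall (fun w => by simp only [Pi.mul_apply, id_eq]; ring))
  have hderiv : deriv (fun w => lam * w * ∏ k ∈ s, f k w) z = lam * (P + z * S) := hD.deriv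
  -- real coefficients
  set r : ℕ → ℝ := fun k => (1 - Complex.normSq (zs k)) / Complex.normSq (z - zs k) with hr
  have hrpos : ∀ k ∈ s, 0 < r k := by
    intro k hk
    apply div_pos
    · have := hzs k hk
      have h2 : Complex.normSq (zs k) < 1 := by
        rw [Complex.normSq_eq_norm_sq]
        nlinarith [norm_nonneg (zs k)]
      linarith
    · exact Complex.normSq_pos.2 (hm k hk)
  -- each factor nonzero
  have hfne : ∀ k ∈ s, f k z ≠ 0 := fun k hk =>
    div_ne_zero (hm k hk) (hd k hk)
  have hPne : P ≠ 0 := Finset.prod_ne_zero_iff.2 hfne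
  -- z * f' k = f k z * (r k : ℂ)
  have hterm : ∀ k ∈ s, z * f' k = f k z * (r k : ℂ) := by
    intro k hk
    have hdk := hd k hk
    have hmk := hm k hk
    have hkk := hkey k hk
    rw [hf', hf, hr]
    push_cast
    have hnsm : (Complex.normSq (z - zs k) : ℂ) = (starRingEnd ℂ) (z - zs k) * (z - zs k) := by
      rw [mul_comm, Complex.mul_conj]
    have hnsa : ((Complex.normSq (zs k)) : ℂ) = (starRingEnd ℂ) (zs k) * zs k := by
      rw [mul_comm, Complex.mul_conj]
    have hns0 : (Complex.normSq (z - zs k) : ℂ) ≠ 0 := by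
      rw [hnsm]
      refine mul_ne_zero (fun h => hmk ?_) hmk
      rw [← Complex.conj_conj (z - zs k), h, map_zero]
    have hc : (starRingEnd ℂ) (z - zs k) ≠ 0 := fun h => hmk (by rw [← Complex.conj_conj (z - zs k), h, map_zero])
    rw [hnsa, hkk, hnsm]
    field_simp
  -- z * S = P * ∑ r
  have hzS : z * S = P * ((∑ k ∈ s, r k : ℝ) : ℂ) := by
    rw [hSdef, Finset.mul_sum]
    push_cast
    rw [Finset.mul_sum]
    apply Finset.sum_congr rfl
    intro k hk
    have h1 : (∏ j ∈ s.erase k, f j z) * f k z = P := Finset.prod_erase_mul s _ hk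
    calc z * ((∏ j ∈ s.erase k, f j z) • f' k)
        = (∏ j ∈ s.erase k, f j z) * (z * f' k) := by simp [smul_eq_mul]; ring
      _ = (∏ j ∈ s.erase k, f j z) * (f k z * (r k : ℂ)) := by rw [hterm k hk]
      _ = P * (r k : ℂ) := by rw [← h1]; ring
  -- norm of P is 1
  have hPnorm : ‖P‖ = 1 := by
    rw [hPdef]
    rw [norm_prod]
    apply Finset.prod_eq_one
    intro k hk
    rw [hf]
    simp only [norm_div]
    rw [hkey k hk]
    rw [norm_mul, RCLike.norm_conj, hz, one_mul]
    exact div_self (by simpa using norm_ne_zero_iff.2 (hm k hk))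
  -- total
  set D : ℂ := lam * (P + z * S) with hDdef
  have hzD : z * D = (lam * z * P) * ((1 + ∑ k ∈ s, r k : ℝ) : ℂ) := by
    rw [hDdef, hzS]
    push_cast
    ring
  have hsum_pos : 0 < ∑ k ∈ s, r k := by
    apply Finset.sum_pos hrpos
    rw [hs]
    exact ⟨1, Finset.mem_Ico.2 ⟨le_refl 1, hn⟩⟩
  have hnormD : ‖D‖ = 1 + ∑ k ∈ s, r k := by
    have h1 : ‖z * D‖ = ‖D‖ := by rw [norm_mul, hz, one_mul]
    rw [← h1, hzD, norm_mul, norm_mul, norm_mul, hlam, hz, hPnorm]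
    rw [Complex.norm_real]
    rw [Real.norm_of_nonneg (by linarith)]
    ring
  rw [hderiv]
  constructor
  · rw [hnormD]; linarith
  · intro h
    rw [h, norm_zero] at hnormD
    linarith
end

section
/- Fix w ∈ 𝕋 and let α_1, …, α_n be the n distinct solutions in 𝕋 of R(z) = w, and set λ_k = R(α_k)/(α_k R′(α_k)). Then for every z ∈ ℂ that is not one of the α_k, not 0, and not a pole of R, one has (R(z)/z)/(R(z) − w) = Σ_{k=1}^{n} λ_k/(z − α_k); moreover Σ_{k=1}^{n} λ_k = 1. -/
open Polynomial Finset in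
/-- Fix `w` on the unit circle and let `α 1, …, α n` be the `n` distinct
solutions on the circle of `R(z) = w`; set `λ_k = R(α_k)/(α_k R'(α_k))`. Then for every
`z ∈ ℂ` that is not one of the `α_k`, not `0`, and not a pole of `R`, one has
`(R(z)/z)/(R(z) − w) = ∑_k λ_k/(z − α_k)`; moreover `∑_k λ_k = 1`. -/
theorem blaschke_partial_fractions
    (n : ℕ) (hn : 2 ≤ n) (zs : ℕ → ℂ)
    (hzs : ∀ k ∈ Finset.Ico 1 n, ‖zs k‖ < 1)
    (lam : ℂ) (hlam : ‖lam‖ = 1) (R : ℂ → ℂ)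
    (hR : ∀ z : ℂ, R z = lam * z * ∏ k ∈ Finset.Ico 1 n,
      (z - zs k) / (1 - (starRingEnd ℂ) (zs k) * z))
    (w : ℂ) (hw : ‖w‖ = 1)
    (α : Fin n → ℂ) (hinj : Function.Injective α)
    (hαT : ∀ k, ‖α k‖ = 1) (hαR : ∀ k, R (α k) = w) :
    (∀ z : ℂ, z ≠ 0 → (∀ k, z ≠ α k) →
        (∀ j ∈ Finset.Ico 1 n, 1 - (starRingEnd ℂ) (zs j) * z ≠ 0) →
        (R z / z) / (R z - w)
          = ∑ k : Fin n, R (α k) / (α k * deriv R (α k)) / (z - α k))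
      ∧ ∑ k : Fin n, R (α k) / (α k * deriv R (α k)) = 1 := by
  classical
  have hlam0 : lam ≠ 0 := fun h => by simp [h] at hlam
  have hw0 : w ≠ 0 := fun h => by simp [h] at hw
  set nod1 : ℂ[X] := Lagrange.nodal (Finset.Ico 1 n) zs with hnod1
  set nod2 : ℂ[X] := Lagrange.nodal Finset.univ α with hnod2
  set Ap : ℂ[X] := C lam * nod1 with hApdef
  set Qp : ℂ[X] := ∏ k ∈ Finset.Ico 1 n, (1 - C ((starRingEnd ℂ) (zs k)) * X) with hQpdef
  have hQeval : ∀ z : ℂ, Qp.eval z = ∏ k ∈ Finset.Ico 1 n, (1 - (starRingEnd ℂ) (zs k) * z) := by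
    intro z; simp [hQpdef, Polynomial.eval_prod]
  have hAeval : ∀ z : ℂ, Ap.eval z = lam * ∏ k ∈ Finset.Ico 1 n, (z - zs k) := by
    intro z; simp [hApdef, hnod1, Lagrange.eval_nodal]
  have hRz : ∀ z : ℂ, R z = z * Ap.eval z / Qp.eval z := by
    intro z
    rw [hR z, hQeval, hAeval, Finset.prod_div_distrib]
    ring
  have hα0 : ∀ k, α k ≠ 0 := fun k h => by simpa [h] using (hαT k)
  have hQα : ∀ k : Fin n, Qp.eval (α k) ≠ 0 := by
    intro k
    rw [hQeval]
    refine Finset.prod_ne_zero_iff.mpr fun j hj => ?_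
    intro h
    have h1 : (starRingEnd ℂ) (zs j) * α k = 1 := by
      have := sub_eq_zero.mp h; linear_combination -this
    have : ‖(starRingEnd ℂ) (zs j) * α k‖ < 1 := by
      rw [norm_mul, RCLike.norm_conj, hαT k, mul_one]; exact hzs j hj
    rw [h1] at this; simp at this
  have hFroot : ∀ k, (α k) * Ap.eval (α k) = w * Qp.eval (α k) := by
    intro k
    have h := hαR k
    rw [hRz] at h
    rw [div_eq_iff (hQα k)] at h
    linear_combination h
  have hinjOn : Set.InjOn α ↑(Finset.univ : Finset (Fin n)) := fun a _ b _ h => hinj h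
  have hcard : #(Finset.univ : Finset (Fin n)) = n := by simp
  have hcard1 : #(Finset.Ico 1 n) = n - 1 := by simp
  have hdeg1 : nod1.degree = (n - 1 : ℕ) := by rw [hnod1, Lagrange.degree_nodal, hcard1]
  have hdeg2 : nod2.degree = (n : ℕ) := by rw [hnod2, Lagrange.degree_nodal, hcard]
  have hXnod1 : (X * nod1 : ℂ[X]).degree = (n : ℕ) := by
    rw [degree_mul, degree_X, hdeg1]
    rw [← Nat.cast_one, ← Nat.cast_add, Nat.cast_inj]
    omega
  have hQdeg : Qp.degree ≤ ((n - 1 : ℕ) : WithBot ℕ) := by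
    rw [hQpdef]
    have h1 : ∀ i ∈ Finset.Ico 1 n, (1 - C ((starRingEnd ℂ) (zs i)) * X).degree ≤ (1 : WithBot ℕ) := by
      intro i _
      refine le_trans (degree_sub_le _ _) (max_le (by simp) ?_)
      calc (C ((starRingEnd ℂ) (zs i)) * X).degree ≤ (C ((starRingEnd ℂ) (zs i))).degree + X.degree := degree_mul_le _ _
        _ ≤ 0 + 1 := add_le_add degree_C_le degree_X_le
        _ = 1 := by simp
    refine le_trans (Polynomial.degree_prod_le _ _) (le_trans (Finset.sum_le_sum h1) ?_)
    rw [Finset.sum_const, hcard1]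
    simp [nsmul_eq_mul, mul_one]
  have hFact : X * Ap - C w * Qp = C lam * nod2 := by
    refine Polynomial.eq_of_degree_sub_lt_of_eval_index_eq Finset.univ hinjOn ?_ ?_
    · rw [hcard]
      have hmain : (X * nod1 - nod2).degree < ((n : ℕ) : WithBot ℕ) := by
        have := Polynomial.degree_sub_lt (hXnod1.trans hdeg2.symm)
          (by intro h; rw [h] at hXnod1; simp at hXnod1)
          (by rw [(monic_X.mul (Lagrange.nodal_monic)).leadingCoeff,
                (Lagrange.nodal_monic).leadingCoeff])
        rwa [hXnod1] at this
      have heq : X * Ap - C w * Qp - C lam * nod2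
          = C lam * (X * nod1 - nod2) - C w * Qp := by
        rw [hApdef]; ring
      rw [heq]
      refine lt_of_le_of_lt (degree_sub_le _ _) (max_lt ?_ ?_)
      · rwa [degree_C_mul hlam0]
      · rw [degree_C_mul hw0]
        refine lt_of_le_of_lt hQdeg ?_
        rw [Nat.cast_lt]; omega
    · intro k _
      have h2 : eval (α k) nod2 = 0 := by
        rw [hnod2]; exact Lagrange.eval_nodal_at_node (Finset.mem_univ k)
      simp [eval_sub, eval_mul, h2, sub_eq_zero, hFroot k]
  have hnodz : ∀ k, eval (α k) nod2 = 0 := fun k => by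
    rw [hnod2]; exact Lagrange.eval_nodal_at_node (Finset.mem_univ k)
  set W : Fin n → ℂ := Lagrange.nodalWeight Finset.univ α with hWdef
  have hW : ∀ k, W k ≠ 0 := fun k =>
    Lagrange.nodalWeight_ne_zero hinjOn (Finset.mem_univ k)
  have hD2 : ∀ k, eval (α k) (derivative nod2) = (W k)⁻¹ := by
    intro k
    rw [hWdef, Lagrange.nodalWeight_eq_eval_derivative_nodal (Finset.mem_univ k), inv_inv, hnod2]
  have hRfun : R = fun z => eval z (X * Ap) / eval z Qp := by
    funext z; rw [hRz]; simp [eval_mul]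
  have hXA : (X * Ap : ℂ[X]) = C lam * nod2 + C w * Qp := by
    rw [← hFact]; ring
  have hderiv : ∀ k, deriv R (α k) = lam * (W k)⁻¹ / eval (α k) Qp := by
    intro k
    have hd := deriv_div (c := fun z => eval z (X * Ap)) (d := fun z => eval z Qp) (x := α k)
      (Polynomial.differentiableAt _) (Polynomial.differentiableAt _) (hQα k)
    rw [hRfun]
    change deriv ((fun z => eval z (X * Ap)) / fun z => eval z Qp) (α k) = _
    rw [hd, Polynomial.deriv, Polynomial.deriv]
    have e1 : eval (α k) (X * Ap) = w * eval (α k) Qp := by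
      rw [hXA]; simp [hnodz k]
    have e2 : eval (α k) (derivative (X * Ap))
        = lam * (W k)⁻¹ + w * eval (α k) (derivative Qp) := by
      rw [hXA, derivative_add, derivative_mul, derivative_mul]
      simp [hnodz k, hD2 k]
    beta_reduce
    rw [e1, e2, div_eq_div_iff (pow_ne_zero 2 (hQα k)) (hQα k)]
    ring
  set r : Fin n → ℂ := fun k => eval (α k) Ap with hrdef
  have hlamk : ∀ k, R (α k) / (α k * deriv R (α k)) = W k * r k / lam := by
    intro k
    rw [hαR k, hderiv k, hrdef]
    have h1 := hFroot k
    field_simp [hα0 k, hQα k, hW k]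
    linear_combination (-1 : ℂ) * h1
  have hApdeg : Ap.degree < (#(Finset.univ : Finset (Fin n)) : WithBot ℕ) := by
    rw [hcard, hApdef, degree_C_mul hlam0, hdeg1, Nat.cast_lt]
    omega
  have hinterp : Ap = Lagrange.interpolate Finset.univ α r := by
    exact Lagrange.eq_interpolate hinjOn hApdeg
  have hsum : ∑ k : Fin n, W k * r k = lam := by
    have hco := congrArg (fun p : ℂ[X] => p.coeff (n - 1)) hinterp
    have hl : Ap.coeff (n - 1) = lam := by
      rw [hApdef, coeff_C_mul]
      have hnd : nod1.natDegree = n - 1 := by rw [hnod1, Lagrange.natDegree_nodal, hcard1]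
      have h1 : nod1.coeff (n - 1) = 1 := by
        rw [← hnd]; exact (Lagrange.nodal_monic).coeff_natDegree
      rw [h1, mul_one]
    have hbasis : ∀ k : Fin n, (Lagrange.basis Finset.univ α k).coeff (n - 1) = W k := by
      intro k
      have hb : Lagrange.basis Finset.univ α k
          = C (W k) * Lagrange.nodal (Finset.univ.erase k) α := by
        rw [hWdef, Lagrange.basis_eq_prod_sub_inv_mul_nodal_div (Finset.mem_univ k),
          ← Lagrange.nodal_erase_eq_nodal_div (Finset.mem_univ k)]
      have hnd : (Lagrange.nodal (Finset.univ.erase k) α).natDegree = n - 1 := by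
        rw [Lagrange.natDegree_nodal, Finset.card_erase_of_mem (Finset.mem_univ k), hcard]
      rw [hb, coeff_C_mul, ← hnd, (Lagrange.nodal_monic).coeff_natDegree, mul_one]
    rw [hl, Lagrange.interpolate_apply, Polynomial.finset_sum_coeff] at hco
    simp only [coeff_C_mul, hbasis] at hco
    rw [hco]
    exact Finset.sum_congr rfl fun k _ => mul_comm _ _
  constructor
  · intro z hz0 hzα hzden
    have hQz : eval z Qp ≠ 0 := by
      rw [hQeval]; exact Finset.prod_ne_zero_iff.mpr hzden
    have hzαne : ∀ i ∈ (Finset.univ : Finset (Fin n)), z ≠ α i := fun i _ => hzα i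
    have hnodzz : eval z nod2 ≠ 0 := by
      rw [hnod2]; exact Lagrange.eval_nodal_not_at_node hzαne
    have hAz : eval z Ap = eval z nod2 * ∑ k : Fin n, W k * (z - α k)⁻¹ * r k := by
      conv_lhs => rw [hinterp]
      rw [Lagrange.eval_interpolate_not_at_node r hzαne, hnod2]
    have hL1 : R z / z = eval z Ap / eval z Qp := by
      rw [hRz]
      field_simp
    have hkey : z * eval z Ap - w * eval z Qp = lam * eval z nod2 := by
      have h := congrArg (eval z) hFact
      simpa using h
    have hL2 : R z - w = lam * eval z nod2 / eval z Qp := by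
      rw [hRz, ← hkey]
      field_simp
    have hmain : R z / z / (R z - w) = eval z Ap / (lam * eval z nod2) := by
      rw [hL1, hL2]
      have hln : lam * eval z nod2 ≠ 0 := mul_ne_zero hlam0 hnodzz
      field_simp
    rw [hmain, hAz]
    have hstep : eval z nod2 * (∑ k : Fin n, W k * (z - α k)⁻¹ * r k) / (lam * eval z nod2)
        = (∑ k : Fin n, W k * (z - α k)⁻¹ * r k) / lam := by
      rw [mul_comm lam (eval z nod2), mul_div_mul_left _ _ hnodzz]
    rw [hstep, Finset.sum_div]
    refine Finset.sum_congr rfl fun k _ => ?_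
    have hzk : z - α k ≠ 0 := sub_ne_zero.mpr (hzα k)
    rw [hlamk k, div_div, div_eq_div_iff hlam0 (mul_ne_zero hlam0 hzk)]
    field_simp
  · calc ∑ k : Fin n, R (α k) / (α k * deriv R (α k)) = ∑ k : Fin n, W k * r k / lam := by
          exact Finset.sum_congr rfl fun k _ => hlamk k
      _ = 1 := by rw [← Finset.sum_div, hsum, div_self hlam0]
end

section
/- For every w ∈ 𝕋, Σ_{z ∈ R^{−1}(w)} R(z)/(z R′(z)) = 1, where R^{−1}(w) is the set of the n distinct solutions in 𝕋 of R(z) = w; that is, the transfer operator 𝓛_R satisfies 𝓛_R(1) = 1. -/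
open Polynomial Finset

lemma normSq_identity (a z : ℂ) :
    ‖1 - (starRingEnd ℂ) a * z‖^2 - ‖z - a‖^2 = (1 - ‖z‖^2) * (1 - ‖a‖^2) := by
  simp only [Complex.sq_norm, Complex.normSq_apply,
    Complex.sub_re, Complex.sub_im, Complex.mul_re, Complex.mul_im, Complex.one_re,
    Complex.one_im, Complex.conj_re, Complex.conj_im]
  ring

lemma norm_ratio_le (a z : ℂ) (ha : ‖a‖ < 1) (hz : ‖z‖ < 1) :
    ‖z - a‖ ≤ ‖1 - (starRingEnd ℂ) a * z‖ := by
  have h1 := normSq_identity a z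
  have h2 : (0:ℝ) < 1 - ‖z‖^2 := by nlinarith [norm_nonneg z]
  have h3 : (0:ℝ) < 1 - ‖a‖^2 := by nlinarith [norm_nonneg a]
  nlinarith [norm_nonneg (z - a), norm_nonneg (1 - (starRingEnd ℂ) a * z), mul_pos h2 h3]

lemma norm_ratio_ge (a z : ℂ) (ha : ‖a‖ < 1) (hz : 1 < ‖z‖) :
    ‖1 - (starRingEnd ℂ) a * z‖ ≤ ‖z - a‖ := by
  have h1 := normSq_identity a z
  have h2 : (1 - ‖z‖^2 : ℝ) < 0 := by nlinarith [norm_nonneg z]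
  have h3 : (0:ℝ) < 1 - ‖a‖^2 := by nlinarith [norm_nonneg a]
  nlinarith [norm_nonneg (z - a), norm_nonneg (1 - (starRingEnd ℂ) a * z),
    mul_neg_of_neg_of_pos h2 h3]

lemma term_eq (r a : ℂ) (hr : ‖r‖ = 1) (ha : ‖a‖ < 1)
    (hd : 1 - (starRingEnd ℂ) a * r ≠ 0) :
    r / (r - a) + r * (starRingEnd ℂ) a / (1 - (starRingEnd ℂ) a * r)
      = (((1 - Complex.normSq a) / Complex.normSq (r - a) : ℝ) : ℂ) := by
  have hu : r - a ≠ 0 := by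
    intro h
    rw [sub_eq_zero] at h
    rw [h] at hr
    exact absurd hr (ne_of_lt ha)
  have hrr : r * (starRingEnd ℂ) r = 1 := by
    rw [Complex.mul_conj]
    norm_cast
    rw [Complex.normSq_eq_norm_sq, hr]; norm_num
  have h2 : 1 - (starRingEnd ℂ) a * r = r * (starRingEnd ℂ) (r - a) := by
    rw [map_sub, mul_sub, hrr]; ring
  have hcu : (starRingEnd ℂ) (r - a) ≠ 0 := by
    intro h
    apply hu
    have := congrArg (starRingEnd ℂ) h
    simpa using this
  have hr0 : r ≠ 0 := by
    intro h; rw [h] at hr; simp at hr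
  rw [h2]
  rw [div_add_div _ _ hu (mul_ne_zero hr0 hcu)]
  have hnum : r * (r * (starRingEnd ℂ) (r - a)) + (r - a) * (r * (starRingEnd ℂ) a)
      = r * ((1 : ℂ) - Complex.normSq a) := by
    have haa : a * (starRingEnd ℂ) a = (Complex.normSq a : ℂ) := Complex.mul_conj a
    rw [map_sub, mul_sub]
    rw [mul_sub, hrr]
    ring_nf
    rw [mul_assoc, mul_comm ((starRingEnd ℂ) a) a, haa]
  have hden : (r - a) * (r * (starRingEnd ℂ) (r - a))
      = r * (Complex.normSq (r - a) : ℂ) := by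
    rw [← Complex.mul_conj (r - a)]; ring
  rw [hnum, hden, mul_div_mul_left _ _ hr0]
  push_cast
  ring

lemma coeff_basis {s : Finset ℂ} {r : ℂ} (hr : r ∈ s) :
    (Lagrange.basis s id r).coeff (s.card - 1) = Lagrange.nodalWeight s id r := by
  rw [Lagrange.basis_eq_prod_sub_inv_mul_nodal_div hr,
    ← Lagrange.nodal_erase_eq_nodal_div hr, coeff_C_mul]
  have h1 : (Lagrange.nodal (s.erase r) id).natDegree = s.card - 1 := by
    rw [Lagrange.natDegree_nodal, card_erase_of_mem hr]
  rw [← h1, (Lagrange.nodal_monic).coeff_natDegree, mul_one]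

lemma sum_weight (s : Finset ℂ) (p : ℂ[X]) (hp : p.degree < s.card) :
    ∑ r ∈ s, Lagrange.nodalWeight s id r * p.eval r = p.coeff (s.card - 1) := by
  have hvs : Set.InjOn id (s : Set ℂ) := Function.injective_id.injOn
  have hp2 : p = Lagrange.interpolate s id (fun i => p.eval (id i)) :=
    Lagrange.eq_interpolate hvs hp
  conv_rhs => rw [hp2]
  rw [Lagrange.interpolate_apply, finset_sum_coeff]
  refine Finset.sum_congr rfl fun r hr => ?_
  rw [coeff_C_mul, coeff_basis hr, id, mul_comm]

lemma eq_C_mul_nodal (F : ℂ[X]) (S : Finset ℂ) (hF0 : F ≠ 0)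
    (hroots : ∀ z : ℂ, F.eval z = 0 ↔ z ∈ S)
    (hsimple : ∀ z ∈ S, F.derivative.eval z ≠ 0) :
    F = C F.leadingCoeff * Lagrange.nodal S id ∧ S.card = F.natDegree := by
  classical
  have hnodup : F.roots.Nodup := by
    rw [Multiset.nodup_iff_count_le_one]
    intro a
    rw [count_roots]
    by_contra h
    push_neg at h
    have h2 : 1 < F.rootMultiplicity a := h
    have := isRoot_iterate_derivative_of_lt_rootMultiplicity (n := 1) h2
    simp only [Function.iterate_one] at this
    have ha : a ∈ S := by
      rw [← hroots]
      have h0 : 0 < F.rootMultiplicity a := by omega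
      exact (rootMultiplicity_pos hF0).mp h0
    exact hsimple a ha this
  have htof : F.roots.toFinset = S := by
    ext z
    simp [Multiset.mem_toFinset, mem_roots, hF0, IsRoot.def, hroots]
  have hcardroots : Multiset.card F.roots = F.natDegree :=
    splits_iff_card_roots.mp (IsAlgClosed.splits F)
  have hval : F.roots = S.val := by
    have h1 : F.roots.dedup = F.roots := Multiset.dedup_eq_self.mpr hnodup
    rw [← htof]
    exact h1.symm
  have heq := (IsAlgClosed.splits F).eq_prod_roots
  have hn : Lagrange.nodal S id = (Multiset.map (fun a => X - C a) S.val).prod := by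
    rw [Lagrange.nodal_eq]; rfl
  rw [hval, ← hn] at heq
  constructor
  · exact heq
  · rw [← hcardroots, hval]; rfl

lemma derivative_finset_prod (s : Finset ℕ) (f : ℕ → ℂ[X]) :
    Polynomial.derivative (∏ i ∈ s, f i)
      = ∑ j ∈ s, (∏ i ∈ s.erase j, f i) * Polynomial.derivative (f j) := by
  classical
  rw [Finset.prod_eq_multiset_prod, derivative_prod, Finset.sum_eq_multiset_sum]
  congr 1

lemma prod_deriv_eval (s : Finset ℕ) (g : ℕ → ℂ) (hg : ∀ k ∈ s, g k ≠ 0) (d : ℕ → ℂ) :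
    ∑ j ∈ s, (∏ i ∈ s.erase j, g i) * d j = (∏ i ∈ s, g i) * ∑ j ∈ s, d j * (g j)⁻¹ := by
  rw [Finset.mul_sum]
  refine Finset.sum_congr rfl fun j hj => ?_
  rw [← Finset.mul_prod_erase s g hj]
  have h := hg j hj
  field_simp


/-- For every `w` on the unit circle,
`∑_{z ∈ R⁻¹(w)} R(z)/(z R'(z)) = 1`, where `R⁻¹(w)` is the set of the `n` distinct
solutions on the circle of `R(z) = w`; that is, the transfer operator satisfies
`𝓛_R(1) = 1`. -/
theorem blaschke_transfer_unital
    (n : ℕ) (hn : 2 ≤ n) (zs : ℕ → ℂ)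
    (hzs : ∀ k ∈ Finset.Ico 1 n, ‖zs k‖ < 1)
    (lam : ℂ) (hlam : ‖lam‖ = 1) (R : ℂ → ℂ)
    (hR : ∀ z : ℂ, R z = lam * z * ∏ k ∈ Finset.Ico 1 n,
      (z - zs k) / (1 - (starRingEnd ℂ) (zs k) * z)) :
    ∀ w : ℂ, ‖w‖ = 1 → ∀ S : Finset ℂ, (∀ z : ℂ, z ∈ S ↔ R z = w) →
      ∑ z ∈ S, R z / (z * deriv R z) = 1 := by
  intro w hw S hS
  classical
  set K := Finset.Ico 1 n with hK
  have hlam0 : lam ≠ 0 := by intro h; rw [h] at hlam; simp at hlam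
  have hw0 : w ≠ 0 := by intro h; rw [h] at hw; simp at hw
  have hKcard : K.card = n - 1 := by simp [hK]
  set M : ℂ[X] := ∏ k ∈ K, (X - C (zs k)) with hMdef
  have hM : M.Monic := monic_prod_of_monic _ _ (fun k _ => monic_X_sub_C _)
  have hMdeg : M.natDegree = n - 1 := by
    rw [hMdef, natDegree_prod _ _ (fun k _ => X_sub_C_ne_zero _)]
    simp [hKcard]
  set p : ℂ[X] := C lam * M with hpdef
  have hp0 : p ≠ 0 := mul_ne_zero (by simpa using hlam0) hM.ne_zero
  have hpdeg : p.natDegree = n - 1 := by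
    rw [hpdef, natDegree_C_mul hlam0, hMdeg]
  have hplead : p.coeff (n - 1) = lam := by
    have : p.coeff (n-1) = p.leadingCoeff := by rw [leadingCoeff, hpdeg]
    rw [this, hpdef, leadingCoeff_mul, leadingCoeff_C, hM.leadingCoeff, mul_one]
  set Q : ℂ[X] := ∏ k ∈ K, (1 - C ((starRingEnd ℂ) (zs k)) * X) with hQdef
  have hQev : ∀ z : ℂ, Q.eval z = ∏ k ∈ K, (1 - (starRingEnd ℂ) (zs k) * z) := by
    intro z; rw [hQdef, eval_prod]; simp
  have hpev : ∀ z : ℂ, p.eval z = lam * ∏ k ∈ K, (z - zs k) := by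
    intro z; rw [hpdef, eval_mul, eval_C, hMdef, eval_prod]; simp
  have hQdeg : Q.degree < n := by
    have h1 : Q.natDegree ≤ n - 1 := by
      refine le_trans (natDegree_prod_le _ _) ?_
      rw [← hKcard]
      refine le_trans (Finset.sum_le_card_nsmul K _ 1 ?_) (by simp)
      intro k _
      refine le_trans (natDegree_sub_le _ _) ?_
      have h := natDegree_C_mul_le ((starRingEnd ℂ) (zs k)) X
      simp only [natDegree_one, natDegree_X] at *
      omega
    calc Q.degree ≤ (Q.natDegree : WithBot ℕ) := degree_le_natDegree
    _ ≤ ((n - 1 : ℕ) : WithBot ℕ) := by exact_mod_cast h1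
    _ < (n : WithBot ℕ) := by exact_mod_cast Nat.sub_lt (by omega) one_pos
  set F : ℂ[X] := X * p - C w * Q with hFdef
  have hXpdeg : (X * p).degree = (n : WithBot ℕ) := by
    rw [degree_mul, degree_X, degree_eq_natDegree hp0, hpdeg]
    rw [← Nat.cast_one, ← Nat.cast_add]
    congr 1
    omega
  have hCQdeg : (C w * Q).degree < (n : WithBot ℕ) := by
    rw [degree_C_mul hw0]; exact hQdeg
  have hFdeg : F.degree = (n : WithBot ℕ) := by
    rw [hFdef, degree_sub_eq_left_of_degree_lt (by rw [hXpdeg]; exact hCQdeg), hXpdeg]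
  have hFnat : F.natDegree = n := natDegree_eq_of_degree_eq_some hFdeg
  have hF0 : F ≠ 0 := by
    intro h
    rw [h, natDegree_zero] at hFnat
    omega
  have hFlead : F.leadingCoeff = lam := by
    have h1 : (X * p).coeff n = p.coeff (n - 1) := by
      conv_lhs => rw [show n = (n - 1) + 1 from by omega]
      exact coeff_X_mul p (n - 1)
    rw [leadingCoeff, hFnat, hFdef, coeff_sub, h1, hplead, coeff_C_mul,
      coeff_eq_zero_of_degree_lt hQdeg]
    ring
  have hRall : ∀ z : ℂ, R z = (X * p).eval z / Q.eval z := by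
    intro z
    rw [hR z, hQev z, eval_mul, eval_X, hpev z, Finset.prod_div_distrib]
    ring
  have hQne : ∀ z ∈ S, Q.eval z ≠ 0 := by
    intro z hz h0
    have h := (hS z).mp hz
    rw [hRall z, h0, div_zero] at h
    exact hw0 h.symm
  have hQne' : ∀ z : ℂ, F.eval z = 0 → Q.eval z ≠ 0 := by
    intro z hFz h0
    rw [hQev] at h0
    obtain ⟨k, hk, hfac⟩ := Finset.prod_eq_zero_iff.mp h0
    have hznorm : 1 < ‖z‖ := by
      have h1 : ‖(starRingEnd ℂ) (zs k)‖ * ‖z‖ = 1 := by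
        rw [← norm_mul, show (starRingEnd ℂ) (zs k) * z = 1 by linear_combination -hfac,
          norm_one]
      have h2 : ‖(starRingEnd ℂ) (zs k)‖ < 1 := by
        rw [RCLike.norm_conj]; exact hzs k hk
      nlinarith [norm_nonneg z, norm_nonneg ((starRingEnd ℂ) (zs k))]
    have hXp : (X * p).eval z = 0 := by
      have h2 : (X * p).eval z = F.eval z + w * Q.eval z := by
        simp only [hFdef, eval_sub, eval_mul, eval_C]; ring
      rw [h2, hFz, hQev z, h0, mul_zero, add_zero]
    rw [eval_mul, eval_X, hpev z] at hXp
    rcases mul_eq_zero.mp hXp with h | h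
    · rw [h] at hznorm; norm_num at hznorm
    rcases mul_eq_zero.mp h with h | h
    · exact hlam0 h
    obtain ⟨j, hj, hzj⟩ := Finset.prod_eq_zero_iff.mp h
    rw [sub_eq_zero] at hzj
    rw [hzj] at hznorm
    exact absurd (hzs j hj) (by linarith)
  have hmem : ∀ z : ℂ, z ∈ S ↔ F.eval z = 0 := by
    intro z
    constructor
    · intro hz
      have hq := hQne z hz
      have hrz := (hS z).mp hz
      rw [hRall z, div_eq_iff hq] at hrz
      rw [hFdef]
      simp only [eval_sub, eval_mul, eval_C]
      rw [eval_mul, eval_X] at hrz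
      simp only [eval_X]
      linear_combination hrz
    · intro hFz
      have hq := hQne' z hFz
      rw [hS, hRall z]
      have h2 : (X * p).eval z = w * Q.eval z := by
        have : F.eval z = (X * p).eval z - w * Q.eval z := by rw [hFdef]; simp
        rw [this] at hFz
        linear_combination hFz
      rw [h2, mul_div_assoc, div_self hq, mul_one]
  have hfacne : ∀ z ∈ S, ∀ k ∈ K, 1 - (starRingEnd ℂ) (zs k) * z ≠ 0 := by
    intro z hz k hk h
    exact hQne z hz (by rw [hQev]; exact Finset.prod_eq_zero hk h)
  have hcirc : ∀ z ∈ S, ‖z‖ = 1 := by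
    intro z hz
    have hnorm : ‖z‖ * ∏ k ∈ K, ‖z - zs k‖ / ‖1 - (starRingEnd ℂ) (zs k) * z‖ = 1 := by
      have h := congrArg norm ((hS z).mp hz)
      rw [hR z, norm_mul, norm_mul, hlam, one_mul, norm_prod, hw] at h
      simpa [norm_div] using h
    rcases lt_trichotomy ‖z‖ 1 with h | h | h
    · exfalso
      have hle : ∏ k ∈ K, ‖z - zs k‖ / ‖1 - (starRingEnd ℂ) (zs k) * z‖ ≤ 1 := by
        apply Finset.prod_le_one
        · intro k _; positivity
        · intro k hk
          have hd : 0 < ‖1 - (starRingEnd ℂ) (zs k) * z‖ :=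
            norm_pos_iff.mpr (hfacne z hz k hk)
          rw [div_le_one hd]
          exact norm_ratio_le (zs k) z (hzs k hk) h
      nlinarith [norm_nonneg z, Finset.prod_nonneg (fun (k:ℕ) (_ : k ∈ K) =>
        div_nonneg (norm_nonneg (z - zs k)) (norm_nonneg (1 - (starRingEnd ℂ) (zs k) * z)))]
    · exact h
    · exfalso
      have hge : 1 ≤ ∏ k ∈ K, ‖z - zs k‖ / ‖1 - (starRingEnd ℂ) (zs k) * z‖ := by
        have h1 : ∏ _k ∈ K, (1:ℝ) ≤ ∏ k ∈ K, ‖z - zs k‖ / ‖1 - (starRingEnd ℂ) (zs k) * z‖ := by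
          apply Finset.prod_le_prod
          · intro k _; norm_num
          · intro k hk
            have hd : 0 < ‖1 - (starRingEnd ℂ) (zs k) * z‖ :=
              norm_pos_iff.mpr (hfacne z hz k hk)
            rw [le_div_iff₀ hd, one_mul]
            exact norm_ratio_ge (zs k) z (hzs k hk) h
        simpa using h1
      nlinarith [norm_nonneg z]
  -- log derivative facts and simplicity
  have hsimple : ∀ r ∈ S, F.derivative.eval r ≠ 0 := by
    intro r hr
    have hq := hQne r hr
    have hr1 := hcirc r hr
    have hr0 : r ≠ 0 := by intro h; rw [h] at hr1; simp at hr1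
    have hwQ : r * p.eval r = w * Q.eval r := by
      have h := (hS r).mp hr
      rw [hRall r, div_eq_iff hq, eval_mul, eval_X] at h
      exact h
    have hpr : p.eval r ≠ 0 := by
      intro h
      rw [h, mul_zero] at hwQ
      exact mul_ne_zero hw0 hq hwQ.symm
    have hsub : ∀ j ∈ K, r - zs j ≠ 0 := by
      intro j hj h
      rw [sub_eq_zero] at h
      have h2 := hzs j hj
      rw [← h, hr1] at h2
      linarith
    set A : ℂ := ∑ j ∈ K, (r - zs j)⁻¹ with hA
    set B : ℂ := ∑ j ∈ K, (-(starRingEnd ℂ) (zs j)) * (1 - (starRingEnd ℂ) (zs j) * r)⁻¹ with hB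
    have hp' : p.derivative.eval r = p.eval r * A := by
      rw [hpdef, derivative_C_mul, eval_C_mul, hMdef, derivative_finset_prod]
      simp only [derivative_sub, derivative_X, derivative_C, sub_zero, eval_finset_sum,
        eval_mul, eval_prod, eval_sub, eval_X, eval_C, eval_one, mul_one]
      have hpd := prod_deriv_eval K (fun i => r - zs i) hsub (fun _ => 1)
      simp only [mul_one, one_mul] at hpd
      rw [hpd, ← hA]
      ring
    have hQ' : Q.derivative.eval r = Q.eval r * B := by
      rw [hQdef, derivative_finset_prod]
      simp only [derivative_sub, derivative_one, derivative_C_mul, derivative_X, mul_one,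
        zero_sub, eval_finset_sum, eval_mul, eval_prod, eval_sub, eval_one, eval_neg, eval_C,
        eval_mul, eval_X]
      rw [prod_deriv_eval K (fun i => 1 - (starRingEnd ℂ) (zs i) * r)
        (fun k hk => hfacne r hr k hk) (fun j => -(starRingEnd ℂ) (zs j)), ← hB]
    set T : ℂ := r * A - r * B with hT
    have hTreal : T = ((∑ j ∈ K, (1 - Complex.normSq (zs j)) / Complex.normSq (r - zs j) : ℝ) : ℂ) := by
      rw [hT, hA, hB, Finset.mul_sum, Finset.mul_sum, ← Finset.sum_sub_distrib]
      push_cast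
      refine Finset.sum_congr rfl fun j hj => ?_
      have hte := term_eq r (zs j) hr1 (hzs j hj) (hfacne r hr j hj)
      rw [div_eq_mul_inv, div_eq_mul_inv] at hte
      push_cast at hte
      linear_combination hte
    have hTne : (1 : ℂ) + T ≠ 0 := by
      rw [hTreal]
      have hpos : 0 ≤ ∑ j ∈ K, (1 - Complex.normSq (zs j)) / Complex.normSq (r - zs j) := by
        apply Finset.sum_nonneg
        intro j hj
        apply div_nonneg
        · have h2 : Complex.normSq (zs j) < 1 := by
            rw [Complex.normSq_eq_norm_sq]
            nlinarith [norm_nonneg (zs j), hzs j hj]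
          linarith
        · exact Complex.normSq_nonneg _
      rw [show (1:ℂ) = ((1:ℝ):ℂ) from by norm_num, ← Complex.ofReal_add, Ne,
        Complex.ofReal_eq_zero]
      intro h
      linarith
    have hFd : F.derivative.eval r = p.eval r + r * (p.eval r * A) - w * (Q.eval r * B) := by
      rw [hFdef]
      simp only [derivative_sub, derivative_mul, derivative_X, derivative_C, eval_sub,
        eval_add, eval_mul, eval_X, eval_C, one_mul, zero_mul, zero_add]
      rw [hp', hQ']
    intro hF'
    have hmain : r * p.eval r * (1 + T) = 0 := by
      rw [hT]
      have : r * F.derivative.eval r = 0 := by rw [hF', mul_zero]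
      rw [hFd] at this
      linear_combination this - r * B * hwQ
    rcases mul_eq_zero.mp hmain with h | h
    · rcases mul_eq_zero.mp h with h | h
      · exact hr0 h
      · exact hpr h
    · exact hTne h
  have hsummand : ∀ r ∈ S, R r / (r * deriv R r) = p.eval r / F.derivative.eval r := by
    intro r hr
    have hq := hQne r hr
    have hr1 := hcirc r hr
    have hr0 : r ≠ 0 := by intro h; rw [h] at hr1; simp at hr1
    have hwQ : r * p.eval r = w * Q.eval r := by
      have h := (hS r).mp hr
      rw [hRall r, div_eq_iff hq, eval_mul, eval_X] at h
      exact h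
    have hRfun : R = fun z => (X * p).eval z / Q.eval z := funext hRall
    have hd : HasDerivAt R
        (((X * p).derivative.eval r * Q.eval r - (X * p).eval r * Q.derivative.eval r)
          / Q.eval r ^ 2) r := by
      rw [hRfun]
      exact ((X * p).hasDerivAt r).div (Q.hasDerivAt r) hq
    rw [hd.deriv, (hS r).mp hr]
    have hnum : (X * p).derivative.eval r * Q.eval r - (X * p).eval r * Q.derivative.eval r
        = Q.eval r * F.derivative.eval r := by
      have hF' : F.derivative.eval r
          = (X * p).derivative.eval r - w * Q.derivative.eval r := by
        simp only [hFdef, derivative_sub, derivative_mul, derivative_C, eval_sub, eval_add,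
          eval_mul, eval_C, zero_mul, zero_add]
      have hXp : (X * p).eval r = w * Q.eval r := by
        rw [eval_mul, eval_X]; exact hwQ
      rw [hF', hXp]
      ring
    rw [hnum]
    have hF'ne := hsimple r hr
    have h2 : Q.eval r * F.derivative.eval r / Q.eval r ^ 2
        = F.derivative.eval r / Q.eval r := by
      rw [pow_two, mul_div_mul_left _ _ hq]
    rw [h2, div_eq_div_iff (mul_ne_zero hr0 (div_ne_zero hF'ne hq)) hF'ne]
    field_simp
    first
    | linear_combination F.derivative.eval r * hwQ
    | linear_combination (-(F.derivative.eval r)) * hwQ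
    | (ring_nf; linear_combination (-1 : ℂ) * hwQ)
  obtain ⟨hFfact, hScard⟩ := eq_C_mul_nodal F S hF0 (fun z => (hmem z).symm) hsimple
  have hScard' : S.card = n := by rw [hScard, hFnat]
  rw [hFlead] at hFfact
  have hterm : ∀ r ∈ S, R r / (r * deriv R r)
      = Lagrange.nodalWeight S id r * p.eval r * lam⁻¹ := by
    intro r hr
    rw [hsummand r hr]
    have hnw : Lagrange.nodalWeight S id r ≠ 0 :=
      Lagrange.nodalWeight_ne_zero Function.injective_id.injOn hr
    have hFd : F.derivative.eval r = lam * (Lagrange.nodalWeight S id r)⁻¹ := by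
      have h1 : F.derivative = C lam * Polynomial.derivative (Lagrange.nodal S id) := by
        rw [hFfact, derivative_C_mul]
      rw [h1, eval_mul, eval_C,
        show r = id r from rfl, Lagrange.eval_nodal_derivative_eval_node_eq hr,
        Lagrange.nodalWeight_eq_eval_nodal_erase_inv, inv_inv]
      simp only [id_eq]
    rw [hFd, div_eq_mul_inv, mul_inv, inv_inv]
    ring
  rw [Finset.sum_congr rfl hterm, ← Finset.sum_mul]
  have hdeg : p.degree < (S.card : WithBot ℕ) := by
    rw [degree_eq_natDegree hp0, hpdeg, hScard']
    exact_mod_cast Nat.sub_lt (by omega) one_pos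
  rw [sum_weight S p hdeg, hScard', hplead, mul_inv_cancel₀ hlam0]
end

section
/- There exist θ₀ ∈ [0, 2π] and a strictly increasing continuously differentiable function ψ : [θ₀ − 2π, θ₀] → ℝ such that ψ(θ₀ − 2π) = 0, ψ(θ₀) = 2nπ, and R(e^{iθ}) = e^{iψ(θ)} for all θ ∈ [θ₀ − 2π, θ₀]. -/
open Complex intervalIntegral MeasureTheory Real Finset

noncomputable def pk (z : ℂ) (t : ℝ) : ℝ :=
  (1 - ‖z‖ ^ 2) / ‖Complex.exp (t * Complex.I) - z‖ ^ 2

noncomputable def phik (z : ℂ) (θ : ℝ) : ℝ := ∫ t in (0:ℝ)..θ, pk z t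

lemma norm_exp_I (t : ℝ) : ‖Complex.exp (t * Complex.I)‖ = 1 := by
  simpa using Complex.norm_exp_ofReal_mul_I t

lemma exp_sub_ne {z : ℂ} (hz : ‖z‖ < 1) (t : ℝ) :
    Complex.exp (t * Complex.I) - z ≠ 0 := by
  intro h
  rw [sub_eq_zero] at h
  rw [← h] at hz
  simp [norm_exp_I t] at hz

lemma one_sub_conj_exp_ne {z : ℂ} (hz : ‖z‖ < 1) (t : ℝ) :
    1 - (starRingEnd ℂ) z * Complex.exp (t * Complex.I) ≠ 0 := by
  intro h
  rw [sub_eq_zero] at h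
  have : ‖(starRingEnd ℂ) z * Complex.exp (t * Complex.I)‖ = ‖z‖ := by
    rw [norm_mul, norm_exp_I, RCLike.norm_conj, mul_one]
  rw [← h] at this
  simp at this
  linarith

lemma pk_pos {z : ℂ} (hz : ‖z‖ < 1) (t : ℝ) : 0 < pk z t := by
  apply div_pos
  · nlinarith [norm_nonneg z]
  · exact pow_pos (norm_pos_iff.mpr (exp_sub_ne hz t)) 2

lemma pk_cont {z : ℂ} (hz : ‖z‖ < 1) : Continuous (pk z) := by
  apply continuous_const.div
  · fun_prop
  · exact fun t => pow_ne_zero _ (norm_ne_zero_iff.mpr (exp_sub_ne hz t))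

lemma pk_periodic (z : ℂ) : Function.Periodic (pk z) (2 * Real.pi) := by
  intro t
  unfold pk
  congr 3
  push_cast
  rw [add_mul, Complex.exp_add, Complex.exp_two_pi_mul_I, mul_one]

lemma hasDerivAt_phik {z : ℂ} (hz : ‖z‖ < 1) (θ : ℝ) :
    HasDerivAt (phik z) (pk z θ) θ :=
  ((pk_cont hz).integral_hasStrictDerivAt 0 θ).hasDerivAt

lemma hasDerivAt_cexpI (θ : ℝ) :
    HasDerivAt (fun t : ℝ => Complex.exp (t * Complex.I))
      (Complex.exp (θ * Complex.I) * Complex.I) θ := by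
  have h1 : HasDerivAt (fun t : ℝ => (t : ℂ) * Complex.I) Complex.I θ := by
    simpa using (Complex.ofRealCLM.hasDerivAt (x := θ)).mul_const Complex.I
  simpa using h1.cexp

noncomputable def gk (z : ℂ) (θ : ℝ) : ℂ :=
  (Complex.exp (θ * Complex.I) - z) * (1 - (starRingEnd ℂ) z * Complex.exp (θ * Complex.I))⁻¹ *
    Complex.exp (-(phik z θ : ℂ) * Complex.I)

lemma ofReal_norm_sq (u : ℂ) : ((‖u‖ ^ 2 : ℝ) : ℂ) = u * (starRingEnd ℂ) u := by
  rw [Complex.mul_conj]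
  norm_cast
  rw [Complex.normSq_eq_norm_sq]

lemma hasDerivAt_gk {z : ℂ} (hz : ‖z‖ < 1) (θ : ℝ) : HasDerivAt (gk z) 0 θ := by
  set w := Complex.exp ((θ : ℂ) * Complex.I) with hwdef
  have hwc : w * (starRingEnd ℂ) w = 1 := by
    have := ofReal_norm_sq w
    rw [norm_exp_I θ] at this
    simpa using this.symm
  have ha : w - z ≠ 0 := exp_sub_ne hz θ
  have hac : (starRingEnd ℂ) w - (starRingEnd ℂ) z ≠ 0 := by
    rw [← map_sub]
    exact (map_ne_zero _).mpr ha
  have hd : 1 - (starRingEnd ℂ) z * w ≠ 0 := one_sub_conj_exp_ne hz θ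
  have hE := hasDerivAt_cexpI θ
  have h1 : HasDerivAt (fun t : ℝ => Complex.exp (t * Complex.I) - z) (w * Complex.I) θ :=
    hE.sub_const z
  have h2 : HasDerivAt (fun t : ℝ => 1 - (starRingEnd ℂ) z * Complex.exp (t * Complex.I))
      (-((starRingEnd ℂ) z * (w * Complex.I))) θ := (hE.const_mul _).const_sub 1
  have h3 : HasDerivAt (fun t : ℝ => (1 - (starRingEnd ℂ) z * Complex.exp (t * Complex.I))⁻¹)
      (-((1 - (starRingEnd ℂ) z * w) ^ 2)⁻¹ * -((starRingEnd ℂ) z * (w * Complex.I))) θ :=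
    (hasDerivAt_inv hd).comp θ h2
  have h4 : HasDerivAt (fun t : ℝ => -(phik z t : ℂ) * Complex.I)
      (-(pk z θ : ℂ) * Complex.I) θ := by
    simpa using ((hasDerivAt_phik hz θ).ofReal_comp).neg.mul_const Complex.I
  have h5 := h4.cexp
  have h6 := (h1.mul h3).mul h5
  have hp : ((pk z θ : ℝ) : ℂ)
      = (1 - z * (starRingEnd ℂ) z) / ((w - z) * ((starRingEnd ℂ) w - (starRingEnd ℂ) z)) := by
    unfold pk
    rw [Complex.ofReal_div, Complex.ofReal_sub, Complex.ofReal_one, ofReal_norm_sq,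
      ofReal_norm_sq, map_sub]
  have hw0 : w ≠ 0 := Complex.exp_ne_zero _
  have hcw : (starRingEnd ℂ) w = w⁻¹ :=
    eq_inv_of_mul_eq_one_left (by rw [mul_comm]; exact hwc)
  have hac' : w⁻¹ - (starRingEnd ℂ) z ≠ 0 := by rw [← hcw]; exact hac
  have hp3 : ((pk z θ : ℝ) : ℂ)
      = w * (1 - z * (starRingEnd ℂ) z) / ((w - z) * (1 - (starRingEnd ℂ) z * w)) := by
    rw [hp, hcw]
    rw [div_eq_div_iff (mul_ne_zero ha hac') (mul_ne_zero ha hd)]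
    field_simp
  refine h6.congr_deriv ?_
  simp only [Pi.mul_apply]
  rw [← hwdef]
  rw [hp3]
  simp only [neg_mul]
  set E := Complex.exp (-((phik z θ : ℂ) * Complex.I)) with hE'
  have hd' : 1 - w * (starRingEnd ℂ) z ≠ 0 := by rw [mul_comm]; exact hd
  field_simp
  ring

lemma phik_zero (z : ℂ) : phik z 0 = 0 := intervalIntegral.integral_same

lemma factor_eq {z : ℂ} (hz : ‖z‖ < 1) (θ : ℝ) :
    (Complex.exp (θ * Complex.I) - z) / (1 - (starRingEnd ℂ) z * Complex.exp (θ * Complex.I))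
      = (1 - z) / (1 - (starRingEnd ℂ) z) * Complex.exp ((phik z θ : ℂ) * Complex.I) := by
  have h : gk z θ = gk z 0 :=
    is_const_of_deriv_eq_zero (fun x => (hasDerivAt_gk hz x).differentiableAt)
      (fun x => (hasDerivAt_gk hz x).deriv) θ 0
  unfold gk at h
  rw [phik_zero] at h
  simp only [Complex.ofReal_zero, zero_mul, Complex.exp_zero, neg_zero, mul_one] at h
  have hEc : Complex.exp (-(phik z θ : ℂ) * Complex.I) * Complex.exp ((phik z θ : ℂ) * Complex.I)
      = 1 := by
    rw [← Complex.exp_add]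
    ring_nf
    exact Complex.exp_zero
  rw [div_eq_mul_inv, div_eq_mul_inv, ← h, mul_assoc, hEc, mul_one]

lemma integral_pk {z : ℂ} (hz : ‖z‖ < 1) :
    ∫ t in (0:ℝ)..(2 * Real.pi), pk z t = 2 * Real.pi := by
  set q : ℝ → ℂ := fun t => Complex.exp (t * Complex.I) * (Complex.exp (t * Complex.I) - z)⁻¹
    with hq
  have hqc : Continuous q := by
    apply Continuous.mul
    · fun_prop
    · exact Continuous.inv₀ (by fun_prop) (fun t => exp_sub_ne hz t)
  have hcirc : (∫ t in (0:ℝ)..(2 * Real.pi), q t) = 2 * Real.pi := by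
    have hmem : z ∈ Metric.ball (0 : ℂ) 1 := by
      simpa [Metric.mem_ball, dist_eq_norm] using hz
    have h2 := circleIntegral.integral_sub_inv_of_mem_ball hmem
    unfold circleIntegral at h2
    simp only [deriv_circleMap, circleMap_zero, smul_eq_mul] at h2
    simp only [Complex.ofReal_one, one_mul] at h2
    have heq : ∀ t : ℝ, Complex.exp (t * Complex.I) * Complex.I *
        (Complex.exp (t * Complex.I) - z)⁻¹ = q t * Complex.I := fun t => by
      simp only [hq]; ring
    rw [intervalIntegral.integral_congr (fun t _ => heq t),
      intervalIntegral.integral_mul_const] at h2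
    have hI : (Complex.I : ℂ) ≠ 0 := Complex.I_ne_zero
    field_simp at h2
    exact h2
  have hconj : (∫ t in (0:ℝ)..(2 * Real.pi), (starRingEnd ℂ) (q t))
      = (starRingEnd ℂ) (∫ t in (0:ℝ)..(2 * Real.pi), q t) := by
    simp only [intervalIntegral.intervalIntegral_eq_integral_uIoc]
    rw [integral_conj, Complex.real_smul, Complex.real_smul, map_mul, Complex.conj_ofReal]
  have hpt : ∀ t : ℝ, ((pk z t : ℝ) : ℂ) = q t + (starRingEnd ℂ) (q t) - 1 := by
    intro t
    set w := Complex.exp ((t : ℂ) * Complex.I) with hwdef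
    have hwc : w * (starRingEnd ℂ) w = 1 := by
      have := ofReal_norm_sq w
      rw [norm_exp_I t] at this
      simpa using this.symm
    have hw0 : w ≠ 0 := Complex.exp_ne_zero _
    have hcw : (starRingEnd ℂ) w = w⁻¹ :=
      eq_inv_of_mul_eq_one_left (by rw [mul_comm]; exact hwc)
    have ha : w - z ≠ 0 := exp_sub_ne hz t
    have hac : (starRingEnd ℂ) w - (starRingEnd ℂ) z ≠ 0 := by
      rw [← map_sub]; exact (map_ne_zero _).mpr ha
    have hac' : w⁻¹ - (starRingEnd ℂ) z ≠ 0 := by rw [← hcw]; exact hac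
    have hd : 1 - (starRingEnd ℂ) z * w ≠ 0 := one_sub_conj_exp_ne hz t
    have hp : ((pk z t : ℝ) : ℂ)
        = (1 - z * (starRingEnd ℂ) z) / ((w - z) * ((starRingEnd ℂ) w - (starRingEnd ℂ) z)) := by
      unfold pk
      rw [Complex.ofReal_div, Complex.ofReal_sub, Complex.ofReal_one, ofReal_norm_sq,
        ofReal_norm_sq, map_sub]
    have hp3 : ((pk z t : ℝ) : ℂ)
        = w * (1 - z * (starRingEnd ℂ) z) / ((w - z) * (1 - (starRingEnd ℂ) z * w)) := by
      rw [hp, hcw]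
      rw [div_eq_div_iff (mul_ne_zero ha hac') (mul_ne_zero ha hd)]
      field_simp
    have hq2 : (starRingEnd ℂ) (q t) = (1 - (starRingEnd ℂ) z * w)⁻¹ := by
      simp only [hq, ← hwdef, map_mul, map_inv₀, map_sub, hcw]
      rw [← mul_inv, eq_comm, inv_eq_iff_eq_inv, inv_inv]
      field_simp
    have hq1 : q t = w * (w - z)⁻¹ := rfl
    have hd' : 1 - w * (starRingEnd ℂ) z ≠ 0 := by rw [mul_comm]; exact hd
    rw [hp3, hq2, hq1]
    field_simp
    ring
  have hpc : ((∫ t in (0:ℝ)..(2 * Real.pi), pk z t : ℝ) : ℂ)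
      = ∫ t in (0:ℝ)..(2 * Real.pi), ((pk z t : ℝ) : ℂ) :=
    (intervalIntegral.integral_ofReal).symm
  have hqcc : Continuous (fun t => (starRingEnd ℂ) (q t)) := Complex.continuous_conj.comp hqc
  have hsplit : (∫ t in (0:ℝ)..(2 * Real.pi), ((pk z t : ℝ) : ℂ))
      = (∫ t in (0:ℝ)..(2 * Real.pi), q t)
        + (∫ t in (0:ℝ)..(2 * Real.pi), (starRingEnd ℂ) (q t))
        - (∫ t in (0:ℝ)..(2 * Real.pi), (1 : ℂ)) := by
    rw [← intervalIntegral.integral_add (hqc.intervalIntegrable _ _)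
        (hqcc.intervalIntegrable _ _),
      ← intervalIntegral.integral_sub (f := fun x => q x + (starRingEnd ℂ) (q x)) ((hqc.add hqcc).intervalIntegrable _ _)
        (continuous_const.intervalIntegrable _ _)]
    exact intervalIntegral.integral_congr (fun t _ => hpt t)
  have : ((∫ t in (0:ℝ)..(2 * Real.pi), pk z t : ℝ) : ℂ) = ((2 * Real.pi : ℝ) : ℂ) := by
    rw [hpc, hsplit, hcirc, hconj, hcirc]
    rw [intervalIntegral.integral_const, map_mul, Complex.conj_ofReal, map_ofNat,
      Complex.real_smul]
    push_cast
    ring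
  exact_mod_cast this

lemma phik_sub_two_pi {z : ℂ} (hz : ‖z‖ < 1) (θ : ℝ) :
    phik z (θ - 2 * Real.pi) = phik z θ - 2 * Real.pi := by
  have h1 : phik z (θ - 2 * Real.pi) + (∫ t in (θ - 2 * Real.pi)..θ, pk z t) = phik z θ :=
    intervalIntegral.integral_add_adjacent_intervals
      ((pk_cont hz).intervalIntegrable _ _) ((pk_cont hz).intervalIntegrable _ _)
  have h2 : (∫ t in (θ - 2 * Real.pi)..θ, pk z t) = 2 * Real.pi := by
    have h3 := (pk_periodic z).intervalIntegral_add_eq (θ - 2 * Real.pi) 0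
    rw [sub_add_cancel, zero_add] at h3
    rw [h3]
    exact integral_pk hz
  linarith

/-- There exist `θ₀ ∈ [0, 2π]` and a strictly increasing continuously
differentiable function `ψ : [θ₀ − 2π, θ₀] → ℝ` such that `ψ(θ₀ − 2π) = 0`,
`ψ(θ₀) = 2nπ`, and `R(e^{iθ}) = e^{iψ(θ)}` for all `θ ∈ [θ₀ − 2π, θ₀]`. -/
theorem blaschke_circle_lift
    (n : ℕ) (hn : 2 ≤ n) (zs : ℕ → ℂ)
    (hzs : ∀ k ∈ Finset.Ico 1 n, ‖zs k‖ < 1)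
    (lam : ℂ) (hlam : ‖lam‖ = 1) (R : ℂ → ℂ)
    (hR : ∀ z : ℂ, R z = lam * z * ∏ k ∈ Finset.Ico 1 n,
      (z - zs k) / (1 - (starRingEnd ℂ) (zs k) * z)) :
    ∃ θ₀ ∈ Set.Icc (0 : ℝ) (2 * Real.pi), ∃ ψ : ℝ → ℝ,
      StrictMonoOn ψ (Set.Icc (θ₀ - 2 * Real.pi) θ₀)
      ∧ ContDiffOn ℝ 1 ψ (Set.Icc (θ₀ - 2 * Real.pi) θ₀)
      ∧ ψ (θ₀ - 2 * Real.pi) = 0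
      ∧ ψ θ₀ = 2 * n * Real.pi
      ∧ ∀ θ ∈ Set.Icc (θ₀ - 2 * Real.pi) θ₀,
          R (Complex.exp (θ * Complex.I)) = Complex.exp (ψ θ * Complex.I) := by
  have hπ : (0 : ℝ) < Real.pi := Real.pi_pos
  have hn' : (2 : ℝ) ≤ (n : ℝ) := by exact_mod_cast hn
  set s : Finset ℕ := Finset.Ico 1 n with hs
  set Φ : ℝ → ℝ := fun θ => θ + ∑ k ∈ s, phik (zs k) θ with hΦ
  set P : ℝ → ℝ := fun θ => 1 + ∑ k ∈ s, pk (zs k) θ with hP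
  have hΦd : ∀ θ, HasDerivAt Φ (P θ) θ := fun θ =>
    (hasDerivAt_id θ).add (HasDerivAt.fun_sum fun k hk => hasDerivAt_phik (hzs k hk) θ)
  have hPpos : ∀ θ, 0 < P θ := fun θ => by
    have h0 : 0 ≤ ∑ k ∈ s, pk (zs k) θ :=
      Finset.sum_nonneg fun k hk => (pk_pos (hzs k hk) θ).le
    simp only [hP]
    linarith
  have hPcont : Continuous P :=
    continuous_const.add (continuous_finset_sum _ fun k hk => pk_cont (hzs k hk))
  have hΦmono : StrictMono Φ := strictMono_of_deriv_pos fun x => by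
    rw [(hΦd x).deriv]; exact hPpos x
  have hΦdiff : Differentiable ℝ Φ := fun x => (hΦd x).differentiableAt
  have hΦC1 : ContDiff ℝ 1 Φ := contDiff_one_iff_deriv.mpr ⟨hΦdiff, by
    have hh : deriv Φ = P := funext fun x => (hΦd x).deriv
    rw [hh]; exact hPcont⟩
  have hΦ0 : Φ 0 = 0 := by
    simp [hΦ, phik_zero]
  have hcard : ((s.card : ℕ) : ℝ) = (n : ℝ) - 1 := by
    rw [hs, Nat.card_Ico, Nat.cast_sub (by omega)]
    norm_num
  have hper : ∀ θ, Φ (θ - 2 * Real.pi) = Φ θ - 2 * n * Real.pi := by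
    intro θ
    have hsum : ∀ k ∈ s, phik (zs k) (θ - 2 * Real.pi) = phik (zs k) θ - 2 * Real.pi :=
      fun k hk => phik_sub_two_pi (hzs k hk) θ
    simp only [hΦ]
    rw [Finset.sum_congr rfl hsum, Finset.sum_sub_distrib, Finset.sum_const, nsmul_eq_mul]
    nlinarith [hcard]
  set C : ℂ := lam * ∏ k ∈ s, (1 - zs k) / (1 - (starRingEnd ℂ) (zs k)) with hC
  have hrep : ∀ θ : ℝ, R (Complex.exp (θ * Complex.I))
      = C * Complex.exp ((Φ θ : ℂ) * Complex.I) := by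
    intro θ
    rw [hR]
    have hfac : ∀ k ∈ s, (Complex.exp (θ * Complex.I) - zs k) /
        (1 - (starRingEnd ℂ) (zs k) * Complex.exp (θ * Complex.I))
        = (1 - zs k) / (1 - (starRingEnd ℂ) (zs k))
          * Complex.exp ((phik (zs k) θ : ℂ) * Complex.I) :=
      fun k hk => factor_eq (hzs k hk) θ
    rw [Finset.prod_congr rfl hfac, Finset.prod_mul_distrib, ← Complex.exp_sum]
    rw [hC, hΦ]
    rw [← Finset.sum_mul, Complex.ofReal_add, Complex.ofReal_sum, add_mul, Complex.exp_add]
    ring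
  have hCnorm : ‖C‖ = 1 := by
    rw [hC, norm_mul, hlam, one_mul, norm_prod]
    apply Finset.prod_eq_one
    intro k hk
    have hne : (1 : ℂ) - zs k ≠ 0 := by
      intro h
      rw [sub_eq_zero] at h
      have := hzs k hk
      rw [← h] at this
      simp at this
    have hcc : ‖(1 : ℂ) - (starRingEnd ℂ) (zs k)‖ = ‖(1 : ℂ) - zs k‖ := by
      rw [show (1 : ℂ) - (starRingEnd ℂ) (zs k) = (starRingEnd ℂ) (1 - zs k) by
        rw [map_sub, map_one], RCLike.norm_conj]
    rw [norm_div, hcc, div_self (norm_ne_zero_iff.mpr hne)]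
  set α : ℝ := Complex.arg C with hα
  have hCα : C = Complex.exp ((α : ℂ) * Complex.I) := by
    have h := Complex.norm_mul_exp_arg_mul_I C
    rw [hCnorm] at h
    rw [← h, Complex.ofReal_one, one_mul]
  set m : ℤ := ⌈α / (2 * Real.pi)⌉ with hm
  have h2π : (0 : ℝ) < 2 * Real.pi := by linarith
  have hc1 : α ≤ 2 * Real.pi * m := by
    have := Int.le_ceil (α / (2 * Real.pi))
    rw [← hm] at this
    calc α = α / (2 * Real.pi) * (2 * Real.pi) := by field_simp
    _ ≤ m * (2 * Real.pi) := by nlinarith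
    _ = 2 * Real.pi * m := by ring
  have hc2 : 2 * Real.pi * m ≤ α + 2 * Real.pi := by
    have h1 := Int.ceil_lt_add_one (α / (2 * Real.pi))
    rw [← hm] at h1
    have h2 : ((m : ℝ) - 1) < α / (2 * Real.pi) := by linarith
    have h3 := (lt_div_iff₀ h2π).mp h2
    nlinarith
  have hΦ2π : Φ (2 * Real.pi) = 2 * n * Real.pi := by
    have h := hper (2 * Real.pi)
    rw [sub_self, hΦ0] at h
    linarith
  have hmem : 2 * Real.pi * m ∈ Set.Icc (α + Φ 0) (α + Φ (2 * Real.pi)) := by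
    rw [hΦ0, hΦ2π, add_zero]
    constructor
    · exact hc1
    · nlinarith
  obtain ⟨θ₀, hθ₀mem, hθ₀⟩ := intermediate_value_Icc (by linarith : (0:ℝ) ≤ 2 * Real.pi)
    ((continuous_const.add hΦC1.continuous).continuousOn
      (f := fun θ => α + Φ θ)) hmem
  have hθ₀' : α + Φ θ₀ = 2 * Real.pi * m := hθ₀
  set K : ℝ := α - 2 * Real.pi * m + 2 * n * Real.pi with hK
  refine ⟨θ₀, hθ₀mem, fun θ => Φ θ + K, ?_, ?_, ?_, ?_, ?_⟩
  · exact StrictMono.strictMonoOn (fun a b hab => by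
      have := hΦmono hab
      show Φ a + K < Φ b + K
      linarith) _
  · exact (hΦC1.add contDiff_const).contDiffOn
  · show Φ (θ₀ - 2 * Real.pi) + K = 0
    rw [hper θ₀, hK]
    linarith
  · show Φ θ₀ + K = 2 * n * Real.pi
    rw [hK]
    linarith
  · intro θ _
    show R (Complex.exp (θ * Complex.I)) = Complex.exp (((Φ θ + K : ℝ) : ℂ) * Complex.I)
    rw [hK, hrep θ, hCα, ← Complex.exp_add]
    have : ((Φ θ + (α - 2 * Real.pi * m + 2 * n * Real.pi) : ℝ) : ℂ) * Complex.I
        = ((α : ℂ) * Complex.I + (Φ θ : ℂ) * Complex.I)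
          + (((n : ℤ) - m : ℤ) : ℂ) * (2 * (Real.pi : ℂ) * Complex.I) := by
      push_cast
      ring
    have h2 : Complex.exp (((Φ θ + (α - 2 * Real.pi * m + 2 * n * Real.pi) : ℝ) : ℂ) * Complex.I)
        = Complex.exp ((α : ℂ) * Complex.I + (Φ θ : ℂ) * Complex.I) := by
      rw [this, Complex.exp_add, Complex.exp_int_mul_two_pi_mul_I, mul_one]
    rw [h2]
end

section
/- If f ∈ H²(𝕋), then the composition f ∘ (R|_𝕋) also belongs to H²(𝕋) and ‖f ∘ R‖₂ = ‖f‖₂; that is, the composition operator C_R : f ↦ f ∘ R is an isometry of H²(𝕋) into itself. -/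
open MeasureTheory

/-- The normalized Lebesgue (Haar) measure on the unit circle `𝕋 ⊆ ℂ`, realized as the
pushforward of normalized Lebesgue measure on `(0, 2π]` under `θ ↦ e^{iθ}`. -/
noncomputable def circleHaar : Measure ℂ :=
  (ENNReal.ofReal (2 * Real.pi))⁻¹ •
    (MeasureTheory.volume.restrict (Set.Ioc (0 : ℝ) (2 * Real.pi))).map
      (fun θ : ℝ => Complex.exp (θ * Complex.I))

/-- `f` belongs to the Hardy space `H²(𝕋)`: it is in `L²` of the circle and its Fourier
coefficients `f̂(k) = ∫ f(z) z^{-k} dm(z)` vanish for all `k < 0`. -/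
def InH2 (f : ℂ → ℂ) : Prop :=
  MemLp f 2 circleHaar ∧
    ∀ k : ℤ, k < 0 → ∫ z, f z * z ^ (-k).toNat ∂circleHaar = 0

section BlaschkeAux

open Complex Set Metric

noncomputable section

instance fact_two_pi_pos : Fact (0 < 2 * Real.pi) := ⟨Real.two_pi_pos⟩

namespace BlaschkeAux

/-- The additive circle of circumference 2π. -/
abbrev XC := AddCircle (2 * Real.pi)

lemma integrable_continuousMap (ν : Measure XC) [IsFiniteMeasure ν] (h : C(XC, ℂ)) :
    Integrable h ν := by
  have : IntegrableOn h univ ν := h.continuous.continuousOn.integrableOn_compact isCompact_univ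
  simpa [IntegrableOn] using this

lemma continuous_integral_cm (ν : Measure XC) [IsFiniteMeasure ν] :
    Continuous fun h : C(XC, ℂ) => ∫ x, h x ∂ν := by
  refine (LipschitzWith.of_dist_le_mul (K := (ν univ).toReal.toNNReal) fun a b => ?_).continuous
  have hsub : (∫ x, a x ∂ν) - ∫ x, b x ∂ν = ∫ x, (a x - b x) ∂ν :=
    (integral_sub (integrable_continuousMap ν a) (integrable_continuousMap ν b)).symm
  rw [dist_eq_norm, hsub]
  have hb : ∀ᵐ x ∂ν, ‖a x - b x‖ ≤ dist a b := by
    filter_upwards with x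
    simpa [dist_eq_norm] using ContinuousMap.norm_coe_le_norm (a - b) x
  calc ‖∫ x, (a x - b x) ∂ν‖ ≤ dist a b * (ν univ).toReal :=
        norm_integral_le_of_norm_le_const hb
    _ = ((ν univ).toReal.toNNReal : ℝ) * dist a b := by
        rw [Real.coe_toNNReal _ ENNReal.toReal_nonneg, mul_comm]

lemma measure_ext_of_fourier (ν₁ ν₂ : Measure XC) [IsFiniteMeasure ν₁] [IsFiniteMeasure ν₂]
    (h : ∀ p : ℤ, ∫ x, fourier p x ∂ν₁ = ∫ x, fourier p x ∂ν₂) : ν₁ = ν₂ := by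
  have key : ∀ g : C(XC, ℂ), ∫ x, g x ∂ν₁ = ∫ x, g x ∂ν₂ := by
    intro g
    set S : Set C(XC, ℂ) := {g | ∫ x, g x ∂ν₁ = ∫ x, g x ∂ν₂} with hS
    have hclosed : IsClosed S :=
      isClosed_eq (continuous_integral_cm ν₁) (continuous_integral_cm ν₂)
    have hspan : (Submodule.span ℂ (Set.range (@fourier (2*Real.pi))) : Set C(XC, ℂ)) ⊆ S := by
      intro g hg
      induction hg using Submodule.span_induction with
      | mem g hg => obtain ⟨p, rfl⟩ := hg; exact h p
      | zero => simp [hS]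
      | add g₁ g₂ _ _ h1 h2 =>
          have i1 := integrable_continuousMap ν₁
          have i2 := integrable_continuousMap ν₂
          simp only [hS, Set.mem_setOf_eq, ContinuousMap.coe_add, Pi.add_apply] at *
          rw [integral_add (i1 g₁) (i1 g₂), integral_add (i2 g₁) (i2 g₂), h1, h2]
      | smul c g _ hg =>
          simp only [hS, Set.mem_setOf_eq, ContinuousMap.coe_smul, Pi.smul_apply] at *
          rw [integral_smul, integral_smul, hg]
    have htop : g ∈ (Submodule.span ℂ (Set.range (@fourier (2*Real.pi)))).topologicalClosure := by
      rw [span_fourier_closure_eq_top]; trivial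
    have : g ∈ closure (Submodule.span ℂ (Set.range (@fourier (2*Real.pi))) : Set C(XC, ℂ)) := by
      rw [← Submodule.topologicalClosure_coe]; exact htop
    exact closure_minimal hspan hclosed this
  refine ext_of_forall_lintegral_eq_of_IsFiniteMeasure fun φ => ?_
  have hcm : ∀ (ν : Measure XC), ∫ x, ((φ x : ℝ) : ℂ) ∂ν = ((∫ x, (φ x : ℝ) ∂ν : ℝ) : ℂ) :=
    fun ν => integral_ofReal
  have hg := key ⟨fun x => ((φ x : ℝ) : ℂ), by fun_prop⟩
  simp only [ContinuousMap.coe_mk, hcm] at hg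
  have hre : ∫ x, (φ x : ℝ) ∂ν₁ = ∫ x, (φ x : ℝ) ∂ν₂ := by exact_mod_cast hg
  have h1 := BoundedContinuousFunction.toReal_lintegral_coe_eq_integral φ ν₁
  have h2 := BoundedContinuousFunction.toReal_lintegral_coe_eq_integral φ ν₂
  have f1 := (BoundedContinuousFunction.lintegral_lt_top_of_nnreal ν₁ φ).ne
  have f2 := (BoundedContinuousFunction.lintegral_lt_top_of_nnreal ν₂ φ).ne
  rw [← ENNReal.toReal_eq_toReal_iff' f1 f2, h1, h2, hre]

/-- The exponential parametrization of the circle. -/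
def ee (θ : ℝ) : ℂ := Complex.exp (θ * Complex.I)

lemma measurable_ee : Measurable ee := by unfold ee; fun_prop

lemma norm_ee (θ : ℝ) : ‖ee θ‖ = 1 := by
  unfold ee; exact Complex.norm_exp_ofReal_mul_I θ

lemma ee_ne_zero (θ : ℝ) : ee θ ≠ 0 := Complex.exp_ne_zero _

lemma cH_def : circleHaar = (ENNReal.ofReal (2 * Real.pi))⁻¹ •
    (MeasureTheory.volume.restrict (Set.Ioc (0 : ℝ) (2 * Real.pi))).map ee := rfl

lemma c_ne_zero : (ENNReal.ofReal (2 * Real.pi))⁻¹ ≠ 0 := by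
  exact ENNReal.inv_ne_zero.mpr ENNReal.ofReal_ne_top

lemma ae_circleHaar {p : ℂ → Prop} (hs : MeasurableSet {z | p z})
    (h : ∀ θ : ℝ, p (ee θ)) : ∀ᵐ z ∂circleHaar, p z := by
  rw [cH_def, MeasureTheory.Measure.ae_ennreal_smul_measure_iff c_ne_zero,
    ae_map_iff measurable_ee.aemeasurable hs]
  exact Filter.Eventually.of_forall h

lemma measurableSet_norm_one : MeasurableSet {z : ℂ | ‖z‖ = 1} := by
  apply measurableSet_eq_fun <;> fun_prop

lemma circleHaar_ae_norm_one : ∀ᵐ z ∂circleHaar, ‖z‖ = 1 :=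
  ae_circleHaar measurableSet_norm_one norm_ee

lemma aesm_circleHaar_iff {φ : ℂ → ℂ} :
    AEStronglyMeasurable φ circleHaar ↔
      AEStronglyMeasurable φ ((MeasureTheory.volume.restrict
        (Set.Ioc (0 : ℝ) (2 * Real.pi))).map ee) := by
  constructor <;> rintro ⟨g, hg, hae⟩ <;> refine ⟨g, hg, ?_⟩
  · rwa [cH_def, Filter.EventuallyEq, MeasureTheory.Measure.ae_ennreal_smul_measure_iff c_ne_zero] at hae
  · rwa [cH_def, Filter.EventuallyEq, MeasureTheory.Measure.ae_ennreal_smul_measure_iff c_ne_zero]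

instance : IsProbabilityMeasure circleHaar := by
  constructor
  rw [cH_def, Measure.smul_apply, Measure.map_apply measurable_ee MeasurableSet.univ]
  simp only [Set.preimage_univ, Measure.restrict_apply MeasurableSet.univ, Set.univ_inter,
    Real.volume_Ioc, smul_eq_mul]
  rw [sub_zero, ENNReal.inv_mul_cancel (by positivity) ENNReal.ofReal_ne_top]

lemma integral_circleHaar (φ : ℂ → ℂ) (hφ : AEStronglyMeasurable φ circleHaar) :
    ∫ z, φ z ∂circleHaar = (2*Real.pi)⁻¹ • ∫ θ in Ioc (0:ℝ) (2*Real.pi), φ (ee θ) := by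
  rw [cH_def, integral_smul_measure,
    integral_map measurable_ee.aemeasurable (aesm_circleHaar_iff.mp hφ)]
  congr 1
  rw [ENNReal.toReal_inv, ENNReal.toReal_ofReal Real.two_pi_pos.le]

lemma integral_ee_mul_eq_zero (h : ℂ → ℂ)
    (hd : ∀ z ∈ closedBall (0:ℂ) 1, DifferentiableAt ℂ h z) :
    ∫ θ in Ioc (0:ℝ) (2*Real.pi), ee θ * h (ee θ) = 0 := by
  have h0 : (∮ z in C(0,1), h z) = 0 :=
    circleIntegral_eq_zero_of_differentiable_on_off_countable zero_le_one Set.countable_empty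
      (fun z hz => (hd z hz).continuousAt.continuousWithinAt)
      (fun z hz => hd z (ball_subset_closedBall hz.1))
  have h1 : (∮ z in C(0,1), h z)
      = Complex.I * ∫ θ in (0:ℝ)..(2*Real.pi), ee θ * h (ee θ) := by
    rw [circleIntegral, ← intervalIntegral.integral_const_mul]
    congr 1; funext θ
    rw [deriv_circleMap]
    simp only [circleMap_zero, one_mul, smul_eq_mul, ee, Complex.ofReal_one]
    ring
  rw [h0] at h1
  have h2 : ∫ θ in (0:ℝ)..(2*Real.pi), ee θ * h (ee θ) = 0 := by
    rcases mul_eq_zero.mp h1.symm with h | h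
    · exact absurd h Complex.I_ne_zero
    · exact h
  rwa [intervalIntegral.integral_of_le Real.two_pi_pos.le] at h2

lemma integral_ee_zpow {p : ℤ} (hp : p ≠ 0) :
    ∫ θ in Ioc (0:ℝ) (2*Real.pi), (ee θ)^p = 0 := by
  have key : ∀ θ : ℝ, (ee θ)^p = Complex.exp ((p * Complex.I) * θ) := by
    intro θ
    unfold ee
    rw [← Complex.exp_int_mul]
    congr 1
    ring
  simp only [key]
  rw [← intervalIntegral.integral_of_le Real.two_pi_pos.le,
    integral_exp_mul_complex (by simp [hp, Complex.I_ne_zero])]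
  have : (p : ℂ) * Complex.I * (2 * Real.pi : ℝ) = p * (2 * Real.pi * Complex.I) := by
    push_cast; ring
  rw [this, Complex.exp_int_mul_two_pi_mul_I]
  simp

lemma lemC (R Q : ℂ → ℂ) (hQ : ∀ z ∈ closedBall (0:ℂ) 1, DifferentiableAt ℂ Q z)
    (hfac : ∀ z, R z = z * Q z) (j m : ℕ) (hjm : 1 ≤ j + m) :
    ∫ θ in Ioc (0:ℝ) (2*Real.pi), (R (ee θ))^j * (ee θ)^m = 0 := by
  have hRd : ∀ z ∈ closedBall (0:ℂ) 1, DifferentiableAt ℂ R z := by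
    intro z hz
    have : DifferentiableAt ℂ (fun z => z * Q z) z := differentiableAt_id.mul (hQ z hz)
    exact this.congr_of_eventuallyEq (Filter.Eventually.of_forall fun w => (hfac w))
  rcases Nat.eq_zero_or_pos m with hm | hm
  · subst hm
    have hj : 1 ≤ j := by omega
    have := integral_ee_mul_eq_zero (fun z => Q z * (R z)^(j-1))
      (fun z hz => (hQ z hz).mul ((hRd z hz).pow _))
    rw [← this]
    apply setIntegral_congr_fun measurableSet_Ioc
    intro θ _
    simp only [pow_zero, mul_one]
    calc (R (ee θ))^j = (ee θ * Q (ee θ)) * (R (ee θ))^(j-1) := by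
          rw [← hfac, ← pow_succ']
          congr 1
          omega
      _ = ee θ * (Q (ee θ) * (R (ee θ))^(j-1)) := by ring
  · have := integral_ee_mul_eq_zero (fun z => (R z)^j * z^(m-1))
      (fun z hz => ((hRd z hz).pow _).mul (differentiableAt_id.pow _))
    rw [← this]
    apply setIntegral_congr_fun measurableSet_Ioc
    intro θ _
    calc (R (ee θ))^j * (ee θ)^m = (R (ee θ))^j * (ee θ * (ee θ)^(m-1)) := by
          rw [← pow_succ']
          congr 2
          omega
      _ = ee θ * ((R (ee θ))^j * (ee θ)^(m-1)) := by ring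

/-- For a point on the unit circle, negative powers are conjugates of positive powers. -/
lemma zpow_eq_conj {w : ℂ} (hw : ‖w‖ = 1) (p : ℤ) :
    w ^ p = (starRingEnd ℂ) (w ^ (-p)) := by
  have hconj : (starRingEnd ℂ) w = w⁻¹ := by
    have h1 : w * (starRingEnd ℂ) w = 1 := by
      rw [Complex.mul_conj]
      norm_cast
      rw [Complex.normSq_eq_norm_sq, hw]
      norm_num
    field_simp [show w ≠ 0 by intro h; rw [h] at hw; simp at hw]
    linear_combination h1
  rw [map_zpow₀, hconj, inv_zpow, ← zpow_neg, neg_neg]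

/-- Parametrization of the circle by the additive circle `ℝ/2πℤ`. -/
def gg : XC → ℂ := fun x => (AddCircle.toCircle x : ℂ)

lemma gg_mk (θ : ℝ) : gg (θ : XC) = ee θ := by
  unfold gg ee
  rw [AddCircle.toCircle_apply_mk, Circle.coe_exp]
  congr 2
  rw [div_self (by positivity), one_mul]

lemma continuous_gg : Continuous gg :=
  continuous_subtype_val.comp AddCircle.continuous_toCircle

lemma measurable_gg : Measurable gg := continuous_gg.measurable

lemma cH_eq_map_gg : circleHaar = Measure.map gg AddCircle.haarAddCircle := by
  have h1 : Measure.map (fun θ : ℝ => (θ : XC)) (volume.restrict (Ioc (0:ℝ) (2*Real.pi)))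
      = (volume : Measure XC) := by
    have := (AddCircle.measurePreserving_mk (2*Real.pi) 0).map_eq
    simpa using this
  have h2 : ee = gg ∘ (fun θ : ℝ => (θ : XC)) := funext fun θ => (gg_mk θ).symm
  have hmk : Measurable (fun θ : ℝ => (θ : XC)) := (AddCircle.continuous_mk' _).measurable
  rw [cH_def, h2, ← Measure.map_map measurable_gg hmk, h1,
    AddCircle.volume_eq_smul_haarAddCircle, Measure.map_smul, smul_smul,
    ENNReal.inv_mul_cancel (by positivity) ENNReal.ofReal_ne_top, one_smul]

lemma fourier_gg (p : ℤ) (x : XC) : fourier p x = (gg x) ^ p := by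
  obtain ⟨θ, rfl⟩ := QuotientAddGroup.mk_surjective x
  rw [gg_mk, fourier_coe_apply]
  unfold ee
  rw [← Complex.exp_int_mul]
  congr 1
  have h2π : (2*Real.pi : ℂ) ≠ 0 := by
    norm_cast
    positivity
  field_simp
  push_cast
  ring

/-- Measurable "angle" map back from the circle. -/
def argA : ℂ → XC := fun w => ((Complex.arg w : ℝ) : XC)

lemma measurable_argA : Measurable argA :=
  (AddCircle.continuous_mk' _).measurable.comp Complex.measurable_arg

lemma gg_argA {w : ℂ} (hw : ‖w‖ = 1) : gg (argA w) = w := by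
  unfold argA
  rw [gg_mk]
  unfold ee
  have := Complex.norm_mul_exp_arg_mul_I w
  rw [hw] at this
  simpa using this

end BlaschkeAux

end

end BlaschkeAux

section main

open Complex Set Metric BlaschkeAux

set_option maxHeartbeats 2000000 in
/-- If `f ∈ H²(𝕋)`, then `f ∘ R` also belongs to `H²(𝕋)` and
`‖f ∘ R‖₂ = ‖f‖₂`; that is, the composition operator `C_R : f ↦ f ∘ R` is an isometry of
`H²(𝕋)` into itself. -/
theorem blaschke_composition_isometry_H2
    (n : ℕ) (hn : 2 ≤ n) (zs : ℕ → ℂ)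
    (hzs : ∀ k ∈ Finset.Ico 1 n, ‖zs k‖ < 1)
    (lam : ℂ) (hlam : ‖lam‖ = 1) (R : ℂ → ℂ)
    (hR : ∀ z : ℂ, R z = lam * z * ∏ k ∈ Finset.Ico 1 n,
      (z - zs k) / (1 - (starRingEnd ℂ) (zs k) * z)) :
    ∀ f : ℂ → ℂ, InH2 f →
      InH2 (fun z => f (R z))
        ∧ eLpNorm (fun z => f (R z)) 2 circleHaar = eLpNorm f 2 circleHaar := by
  have hden : ∀ z : ℂ, ‖z‖ ≤ 1 → ∀ k ∈ Finset.Ico 1 n, (1 - (starRingEnd ℂ) (zs k) * z) ≠ 0 := by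
    intro z hz k hk h
    have h1 : (1:ℂ) = (starRingEnd ℂ) (zs k) * z := by linear_combination h
    have h2 : (1:ℝ) = ‖(starRingEnd ℂ) (zs k) * z‖ := by rw [← h1]; simp
    rw [norm_mul, RCLike.norm_conj] at h2
    nlinarith [hzs k hk, norm_nonneg z, norm_nonneg (zs k)]
  set Q : ℂ → ℂ :=
    fun z => lam * ∏ k ∈ Finset.Ico 1 n, (z - zs k) / (1 - (starRingEnd ℂ) (zs k) * z) with hQ
  have hQd : ∀ z ∈ closedBall (0:ℂ) 1, DifferentiableAt ℂ Q z := by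
    intro z hz
    rw [mem_closedBall_zero_iff] at hz
    apply DifferentiableAt.const_mul
    apply DifferentiableAt.fun_finsetProd
    intro k hk
    exact DifferentiableAt.div (by fun_prop) (by fun_prop) (hden z hz k hk)
  have hfac : ∀ z, R z = z * Q z := by intro z; rw [hR, hQ]; ring
  have hRmeas : Measurable R := by
    have hre : R = fun z => lam * z * ∏ k ∈ Finset.Ico 1 n,
        (z - zs k)/(1 - (starRingEnd ℂ) (zs k)*z) := funext hR
    rw [hre]
    apply Measurable.mul (by fun_prop)
    apply Finset.measurable_prod
    intro k _
    fun_prop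
  have hRnorm : ∀ z : ℂ, ‖z‖ = 1 → ‖R z‖ = 1 := by
    intro z hz
    have hzz : (starRingEnd ℂ) z * z = 1 := by
      rw [mul_comm, Complex.mul_conj]
      norm_cast
      rw [Complex.normSq_eq_norm_sq, hz]
      norm_num
    have hfactor : ∀ k ∈ Finset.Ico 1 n, ‖(z - zs k)/(1 - (starRingEnd ℂ) (zs k) * z)‖ = 1 := by
      intro k hk
      have hzne : z - zs k ≠ 0 := by
        intro h
        have : z = zs k := by linear_combination h
        rw [this] at hz
        have := hzs k hk
        linarith
      have hid : 1 - (starRingEnd ℂ) (zs k) * z = (starRingEnd ℂ) (z - zs k) * z := by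
        rw [map_sub]
        linear_combination -hzz
      rw [norm_div, hid, norm_mul, RCLike.norm_conj, hz, mul_one, div_self]
      simpa [sub_eq_zero] using hzne
    rw [hR, norm_mul, norm_mul, hlam, hz, norm_prod, Finset.prod_congr rfl hfactor]
    simp
  have hIR : ∀ (j m : ℕ), 1 ≤ j + m →
      ∫ θ in Set.Ioc (0:ℝ) (2*Real.pi), (R (ee θ))^j * (ee θ)^m = 0 :=
    lemC R Q hQd hfac
  have hpos_case : ∀ p : ℤ, 0 < p →
      ∫ θ in Set.Ioc (0:ℝ) (2*Real.pi), (R (ee θ))^p = 0 := by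
    intro p hp
    have h0 := hIR p.toNat 0 (by omega)
    rw [← h0]
    apply setIntegral_congr_fun measurableSet_Ioc
    intro θ _
    show R (ee θ) ^ p = R (ee θ) ^ p.toNat * ee θ ^ 0
    rw [pow_zero, mul_one, ← zpow_natCast, Int.toNat_of_nonneg hp.le]
  have hIRz : ∀ p : ℤ, p ≠ 0 →
      ∫ θ in Set.Ioc (0:ℝ) (2*Real.pi), (R (ee θ))^p = 0 := by
    intro p hp
    rcases lt_or_gt_of_ne hp with hneg | hpos
    · have hconv : ∫ θ in Set.Ioc (0:ℝ) (2*Real.pi), (R (ee θ))^p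
          = ∫ θ in Set.Ioc (0:ℝ) (2*Real.pi), (starRingEnd ℂ) ((R (ee θ))^(-p)) := by
        apply setIntegral_congr_fun measurableSet_Ioc
        intro θ _
        exact zpow_eq_conj (hRnorm _ (norm_ee θ)) p
      rw [hconv, integral_conj, hpos_case (-p) (by omega), map_zero]
    · exact hpos_case p hpos
  have hzpow_meas : ∀ p : ℤ, Measurable (fun w : ℂ => w ^ p) := fun p => by fun_prop
  have hint2 : ∀ p : ℤ, p ≠ 0 → ∫ w, w ^ p ∂circleHaar = 0 := by
    intro p hp
    rw [integral_circleHaar _ ((hzpow_meas p).aestronglyMeasurable), integral_ee_zpow hp,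
      smul_zero]
  have hmap : Measure.map R circleHaar = circleHaar := by
    set μ₁ := Measure.map R circleHaar with hμ₁
    haveI : IsProbabilityMeasure μ₁ := Measure.isProbabilityMeasure_map hRmeas.aemeasurable
    have hμ₁ae : ∀ᵐ w ∂μ₁, ‖w‖ = 1 := by
      rw [hμ₁, ae_map_iff hRmeas.aemeasurable measurableSet_norm_one]
      filter_upwards [circleHaar_ae_norm_one] with z hz using hRnorm z hz
    have hint1 : ∀ p : ℤ, p ≠ 0 → ∫ w, w ^ p ∂μ₁ = 0 := by
      intro p hp
      rw [hμ₁, integral_map hRmeas.aemeasurable ((hzpow_meas p).aestronglyMeasurable)]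
      rw [integral_circleHaar (fun z => R z ^ p)
        (((hzpow_meas p).comp hRmeas).aestronglyMeasurable), hIRz p hp, smul_zero]
    set ν₁ := Measure.map argA μ₁ with hν₁
    set ν₂ := Measure.map argA circleHaar with hν₂
    haveI : IsProbabilityMeasure ν₁ := Measure.isProbabilityMeasure_map measurable_argA.aemeasurable
    haveI : IsProbabilityMeasure ν₂ := Measure.isProbabilityMeasure_map measurable_argA.aemeasurable
    have hcf : ∀ (p : ℤ) (μ : Measure ℂ), ∫ x, fourier p x ∂(Measure.map argA μ)
        = ∫ w, fourier p (argA w) ∂μ := fun p μ =>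
      integral_map measurable_argA.aemeasurable (fourier p).continuous.aestronglyMeasurable
    have hfour : ∀ p : ℤ, ∫ x, fourier p x ∂ν₁ = ∫ x, fourier p x ∂ν₂ := by
      intro p
      rcases eq_or_ne p 0 with rfl | hp
      · simp
      · rw [hν₁, hν₂, hcf p μ₁, hcf p circleHaar]
        have he1 : ∫ w, fourier p (argA w) ∂μ₁ = ∫ w, w ^ p ∂μ₁ := by
          apply integral_congr_ae
          filter_upwards [hμ₁ae] with w hw
          rw [fourier_gg, gg_argA hw]
        have he2 : ∫ w, fourier p (argA w) ∂circleHaar = ∫ w, w ^ p ∂circleHaar := by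
          apply integral_congr_ae
          filter_upwards [circleHaar_ae_norm_one] with w hw
          rw [fourier_gg, gg_argA hw]
        rw [he1, he2, hint1 p hp, hint2 p hp]
    have hν := measure_ext_of_fourier ν₁ ν₂ hfour
    have hrec : ∀ (μ : Measure ℂ), (∀ᵐ w ∂μ, ‖w‖ = 1) →
        Measure.map gg (Measure.map argA μ) = μ := by
      intro μ hμ
      rw [Measure.map_map measurable_gg measurable_argA]
      have hae : gg ∘ argA =ᵐ[μ] id := by filter_upwards [hμ] with w hw using gg_argA hw
      rw [Measure.map_congr hae, Measure.map_id]
    calc μ₁ = Measure.map gg ν₁ := (hrec μ₁ hμ₁ae).symm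
      _ = Measure.map gg ν₂ := by rw [hν]
      _ = circleHaar := hrec circleHaar circleHaar_ae_norm_one
  have hmp : MeasurePreserving R circleHaar circleHaar := ⟨hRmeas, hmap⟩
  intro f hf
  obtain ⟨hfL2, hfcoef⟩ := hf
  have hfR2 : MemLp (fun z => f (R z)) 2 circleHaar := by
    have h1 : MemLp f 2 (Measure.map R circleHaar) := by rw [hmap]; exact hfL2
    exact h1.comp_of_map hRmeas.aemeasurable
  have hnorm : eLpNorm (fun z => f (R z)) 2 circleHaar = eLpNorm f 2 circleHaar :=
    eLpNorm_comp_measurePreserving hfL2.aestronglyMeasurable hmp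
  -- the function on the additive circle
  set F : XC → ℂ := fun x => f (gg x) with hFdef
  have hFmem : MemLp F 2 AddCircle.haarAddCircle := by
    have h1 : MemLp f 2 (Measure.map gg AddCircle.haarAddCircle) := by
      rw [← cH_eq_map_gg]; exact hfL2
    exact h1.comp_of_map measurable_gg.aemeasurable
  -- negative Fourier coefficients of F vanish
  have hcoeff : ∀ j : ℤ, j < 0 → fourierCoeff F j = 0 := by
    intro j hj
    unfold fourierCoeff
    have hasm : AEStronglyMeasurable (fun z : ℂ => z ^ (-j) * f z) circleHaar :=
      ((hzpow_meas (-j)).aestronglyMeasurable).mul hfL2.aestronglyMeasurable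
    have h1 : ∫ x : XC, fourier (-j) x • F x ∂AddCircle.haarAddCircle
        = ∫ z, z ^ (-j) * f z ∂circleHaar := by
      rw [cH_eq_map_gg, integral_map measurable_gg.aemeasurable (by rw [← cH_eq_map_gg]; exact hasm)]
      congr 1
      funext x
      rw [fourier_gg, smul_eq_mul]
    rw [h1]
    have h2 : (fun z : ℂ => z ^ (-j) * f z) = fun z => f z * z ^ (-j).toNat := by
      funext z
      rw [mul_comm, ← zpow_natCast, Int.toNat_of_nonneg (by omega)]
    rw [h2]
    exact hfcoef j hj
  -- the coefficients of f ∘ R also vanish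
  have hcoefR : ∀ m : ℕ, 1 ≤ m → ∫ z, z ^ m * f (R z) ∂circleHaar = 0 := by
    intro m hm
    have hzmb : ∀ᵐ z ∂circleHaar, ‖(z:ℂ) ^ m‖ ≤ 1 := by
      filter_upwards [circleHaar_ae_norm_one] with z hz
      rw [norm_pow, hz, one_pow]
    have hkey : ∀ ε : ℝ, 0 < ε → ‖∫ z, z ^ m * f (R z) ∂circleHaar‖ ≤ ε := by
      intro ε hε
      -- Fourier approximation of f by an analytic polynomial
      set fL := hFmem.toLp F with hfL
      set c : ℤ → ℂ := fun i => fourierCoeff F i with hc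
      have hrepr : ∀ i, fourierBasis.repr fL i = c i := by
        intro i
        rw [fourierBasis_repr, hc]
        unfold fourierCoeff
        apply integral_congr_ae
        filter_upwards [hFmem.coeFn_toLp] with x hx
        rw [hx]
      have hsum := (@fourierBasis (2*Real.pi) _).hasSum_repr fL
      obtain ⟨s, hN⟩ := (Metric.tendsto_atTop).mp hsum ε hε
      have hs := hN s le_rfl
      set Ps := ∑ i ∈ s, fourierBasis.repr fL i • (@fourierBasis (2*Real.pi) _) i with hPs
      set q : ℂ → ℂ := fun z => ∑ i ∈ s, c i * z ^ i with hq
      have hqmeas : Measurable q := by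
        apply Finset.measurable_sum
        intro i _
        exact (measurable_const.mul (hzpow_meas i))
      have hqbd : ∀ᵐ z ∂circleHaar, ‖q z‖ ≤ ∑ i ∈ s, ‖c i‖ := by
        filter_upwards [circleHaar_ae_norm_one] with z hz
        refine (norm_sum_le _ _).trans ?_
        apply Finset.sum_le_sum
        intro i _
        rw [norm_mul, norm_zpow, hz, one_zpow, mul_one]
      have hqL2 : MemLp q 2 circleHaar :=
        (memLp_top_of_bound hqmeas.aestronglyMeasurable _ hqbd).mono_exponent le_top
      have hfq2 : MemLp (fun z => f z - q z) 2 circleHaar := hfL2.sub hqL2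
      -- the L² distance between f and q is less than ε
      have hdist : eLpNorm (fun z => f z - q z) 2 circleHaar < ENNReal.ofReal ε := by
        have e1 : eLpNorm (fun z => f z - q z) 2 circleHaar
            = eLpNorm ((fun z => f z - q z) ∘ gg) 2 AddCircle.haarAddCircle := by
          rw [cH_eq_map_gg]
          exact eLpNorm_map_measure (by rw [← cH_eq_map_gg]; exact hfq2.aestronglyMeasurable)
            measurable_gg.aemeasurable
        have hPsCoe : (Ps : XC → ℂ) =ᵐ[AddCircle.haarAddCircle] fun x => q (gg x) := by
          have h1 : Ps = ContinuousMap.toLp 2 AddCircle.haarAddCircle ℂ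
              (∑ i ∈ s, c i • fourier i) := by
            rw [hPs, map_sum]
            refine Finset.sum_congr rfl fun i _ => ?_
            rw [_root_.map_smul, hrepr i]
            congr 1
            exact congrFun coe_fourierBasis i
          rw [h1]
          refine (ContinuousMap.coeFn_toLp _ _).trans ?_
          apply Filter.Eventually.of_forall
          intro x
          simp only [ContinuousMap.coe_sum, ContinuousMap.coe_smul, Finset.sum_apply,
            Pi.smul_apply, smul_eq_mul, hq]
          refine Finset.sum_congr rfl fun i _ => ?_
          rw [fourier_gg]
        have e2 : ((fun z => f z - q z) ∘ gg) =ᵐ[AddCircle.haarAddCircle] (fL - Ps : _) := by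
          have h1 := MeasureTheory.Lp.coeFn_sub fL Ps
          have h2 : (fL : XC → ℂ) =ᵐ[AddCircle.haarAddCircle] fun x => f (gg x) := hFmem.coeFn_toLp
          filter_upwards [h1, h2, hPsCoe] with x hx1 hx2 hx3
          simp only [Function.comp_apply, hx1, Pi.sub_apply, hx2, hx3]
        rw [e1, eLpNorm_congr_ae e2]
        have e3 : eLpNorm (fL - Ps : _) 2 AddCircle.haarAddCircle = ENNReal.ofReal ‖fL - Ps‖ := by
          rw [MeasureTheory.Lp.norm_def,
            ENNReal.ofReal_toReal (MeasureTheory.Lp.eLpNorm_ne_top _)]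
        rw [e3]
        rw [ENNReal.ofReal_lt_ofReal_iff hε]
        rw [← dist_eq_norm, dist_comm]
        exact hs
      -- integral of the polynomial part vanishes
      have hterm_int : ∀ i : ℤ, Integrable (fun z => (R z) ^ i * z ^ m) circleHaar := by
        intro i
        have hb : ∀ᵐ z ∂circleHaar, ‖(R z) ^ i * z ^ m‖ ≤ 1 := by
          filter_upwards [circleHaar_ae_norm_one] with z hz
          rw [norm_mul, norm_zpow, norm_pow, hz, hRnorm z hz, one_zpow, one_pow, mul_one]
        have hasm : AEStronglyMeasurable (fun z => (R z) ^ i * z ^ m) circleHaar :=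
          (((hzpow_meas i).comp hRmeas).mul (by fun_prop : Measurable fun z : ℂ => z ^ m)).aestronglyMeasurable
        exact (memLp_top_of_bound hasm 1 hb).integrable le_top
      have hq0 : ∫ z, q (R z) * z ^ m ∂circleHaar = 0 := by
        have e4 : (fun z => q (R z) * z ^ m)
            = fun z => ∑ i ∈ s, c i * ((R z) ^ i * z ^ m) := by
          funext z
          rw [hq, Finset.sum_mul]
          refine Finset.sum_congr rfl fun i _ => by ring
        rw [e4, integral_finset_sum]
        · apply Finset.sum_eq_zero
          intro i _
          rw [integral_const_mul]
          rcases lt_or_ge i 0 with hi | hi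
          · rw [show c i = 0 from hcoeff i hi, zero_mul]
          · have h5 : ∫ z, (R z) ^ i * z ^ m ∂circleHaar = 0 := by
              rw [integral_circleHaar (fun z => (R z) ^ i * z ^ m) (hterm_int i).1]
              have h6 : ∫ θ in Set.Ioc (0:ℝ) (2*Real.pi), (R (ee θ))^i * (ee θ)^m
                  = ∫ θ in Set.Ioc (0:ℝ) (2*Real.pi), (R (ee θ))^(i.toNat) * (ee θ)^m := by
                apply setIntegral_congr_fun measurableSet_Ioc
                intro θ _
                show R (ee θ) ^ i * ee θ ^ m = R (ee θ) ^ i.toNat * ee θ ^ m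
                have h7 : R (ee θ) ^ i = R (ee θ) ^ i.toNat := by
                  rw [← zpow_natCast, Int.toNat_of_nonneg hi]
                rw [h7]
              rw [h6, hIR i.toNat m (by omega), smul_zero]
            rw [h5, mul_zero]
        · intro i _
          exact (hterm_int i).const_mul (c i)
      -- the error term
      have hfqR2 : MemLp (fun z => f (R z) - q (R z)) 2 circleHaar := by
        have h1 : MemLp (fun z => f z - q z) 2 (Measure.map R circleHaar) := by
          rw [hmap]; exact hfq2
        exact h1.comp_of_map hRmeas.aemeasurable
      have hfqR2norm : eLpNorm (fun z => f (R z) - q (R z)) 2 circleHaar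
          = eLpNorm (fun z => f z - q z) 2 circleHaar := by
        have hcomp : (fun z => f (R z) - q (R z)) = (fun z => f z - q z) ∘ R := rfl
        rw [hcomp]
        exact eLpNorm_comp_measurePreserving hfq2.aestronglyMeasurable hmp
      have hint1 : Integrable (fun z => z ^ m * (f (R z) - q (R z))) circleHaar := by
        exact Integrable.bdd_mul (c := 1)
          ((hfqR2.mono_exponent (by norm_num : (1:ENNReal) ≤ 2)).integrable le_rfl)
          ((by fun_prop : Measurable fun z : ℂ => z ^ m)).aestronglyMeasurable hzmb
      have hint2 : Integrable (fun z => q (R z) * z ^ m) circleHaar := by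
        have e4 : (fun z => q (R z) * z ^ m)
            = fun z => ∑ i ∈ s, c i * ((R z) ^ i * z ^ m) := by
          funext z
          rw [hq, Finset.sum_mul]
          refine Finset.sum_congr rfl fun i _ => by ring
        rw [e4]
        exact integrable_finset_sum _ fun i _ => (hterm_int i).const_mul (c i)
      have hsplit : ∫ z, z ^ m * f (R z) ∂circleHaar
          = (∫ z, z ^ m * (f (R z) - q (R z)) ∂circleHaar) + ∫ z, q (R z) * z ^ m ∂circleHaar := by
        rw [← integral_add hint1 hint2]
        apply integral_congr_ae
        apply Filter.Eventually.of_forall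
        intro z
        ring
      rw [hsplit, hq0, add_zero]
      -- estimate
      calc ‖∫ z, z ^ m * (f (R z) - q (R z)) ∂circleHaar‖
          ≤ ∫ z, ‖z ^ m * (f (R z) - q (R z))‖ ∂circleHaar := norm_integral_le_integral_norm _
        _ ≤ ∫ z, ‖f (R z) - q (R z)‖ ∂circleHaar := by
            apply integral_mono_ae hint1.norm
              ((hfqR2.mono_exponent (by norm_num : (1:ENNReal) ≤ 2)).integrable le_rfl).norm
            filter_upwards [hzmb] with z hz
            calc ‖z ^ m * (f (R z) - q (R z))‖ = ‖z ^ m‖ * ‖f (R z) - q (R z)‖ := norm_mul _ _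
              _ ≤ 1 * ‖f (R z) - q (R z)‖ := mul_le_mul_of_nonneg_right hz (norm_nonneg _)
              _ = ‖f (R z) - q (R z)‖ := one_mul _
        _ = (eLpNorm (fun z => f (R z) - q (R z)) 1 circleHaar).toReal := by
            rw [integral_norm_eq_lintegral_enorm hfqR2.aestronglyMeasurable,
              ← eLpNorm_one_eq_lintegral_enorm]
        _ ≤ ε := by
            have hle : eLpNorm (fun z => f (R z) - q (R z)) 1 circleHaar
                ≤ eLpNorm (fun z => f z - q z) 2 circleHaar := by
              rw [← hfqR2norm]
              exact eLpNorm_le_eLpNorm_of_exponent_le (by norm_num : (1:ENNReal) ≤ 2)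
                hfqR2.aestronglyMeasurable
            calc (eLpNorm (fun z => f (R z) - q (R z)) 1 circleHaar).toReal
                ≤ (ENNReal.ofReal ε).toReal :=
                  ENNReal.toReal_mono ENNReal.ofReal_ne_top (hle.trans_lt hdist).le
              _ = ε := ENNReal.toReal_ofReal hε.le
    have h0 : ‖∫ z, z ^ m * f (R z) ∂circleHaar‖ ≤ 0 := by
      by_contra hcon
      push_neg at hcon
      have := hkey (‖∫ z, z ^ m * f (R z) ∂circleHaar‖ / 2) (by linarith)
      linarith
    have := norm_le_zero_iff.mp h0
    exact this
  constructor
  · constructor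
    · exact hfR2
    · intro k hk
      have hm : 1 ≤ (-k).toNat := by omega
      have := hcoefR (-k).toNat hm
      rw [← this]
      apply integral_congr_ae
      apply Filter.Eventually.of_forall
      intro z
      ring
  · exact hnorm

end main
end
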